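/- arXiv:1204.5760 — 6 statements merged into one kernel-verified Lean document; each statement's English description precedes it below -/
import Mathlib

section
/- Assume there exist a measurable set X̃ ⊆ X with μ(X̃) > 0 and a measurable function A : X̃ → (0,∞) such that for every τ ∈ X̃: (i) g(u,τ) = 0 if and only if u = 0, and (ii) K(s,τ) > 0 for all s ∈ (−A(τ), A(τ)). Then every bounded solution φ of the convolution equation (17) with φ(t₀) = 0 for some t₀ ∈ ℝ satisfies φ(t) = 0 for all t ∈ ℝ. -/
open MeasureTheory Filter Topology Set

theorem stmt1
    {X : Type*} [MeasurableSpace X] (μ : Measure X) [IsFiniteMeasure μ]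
    (K : ℝ → X → ℝ) (g : ℝ → X → ℝ)
    (hKmeas : Measurable fun p : ℝ × X => K p.1 p.2)
    (hKnn : ∀ s τ, 0 ≤ K s τ)
    (hKint : Integrable (fun p : ℝ × X => K p.1 p.2) ((volume : Measure ℝ).prod μ))
    (hKpos : ∀ τ, 0 < ∫ s, K s τ)
    (hgmeas : Measurable fun p : ℝ × X => g p.1 p.2)
    (hg0 : ∀ τ, g 0 τ = 0)
    (hgnn : ∀ u τ, 0 ≤ u → 0 ≤ g u τ)
    (hgcont : ∀ τ, ContinuousOn (fun u => g u τ) (Ici 0))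
    (g' : X → ℝ) (hg'meas : Measurable g') (hg'pos : ∀ τ, 0 < g' τ)
    (hg'lim : ∀ τ, Tendsto (fun u => g u τ / u) (𝓝[>] 0) (𝓝 (g' τ)))
    (Xt : Set X) (hXtm : MeasurableSet Xt) (hXtpos : 0 < μ Xt)
    (A : X → ℝ) (hAmeas : Measurable A) (hApos : ∀ τ ∈ Xt, 0 < A τ)
    (hgz : ∀ τ ∈ Xt, ∀ u, 0 ≤ u → (g u τ = 0 ↔ u = 0))
    (hKposA : ∀ τ ∈ Xt, ∀ s ∈ Ioo (-(A τ)) (A τ), 0 < K s τ)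
    (φ : ℝ → ℝ) (hφc : Continuous φ)
    (hφnn : ∀ t, 0 ≤ φ t)
    (hφbd : ∃ M, ∀ t, φ t ≤ M)
    (hφeq : ∀ t, φ t = ∫ τ, (∫ s, K s τ * g (φ (t - s)) τ) ∂μ)
    (t0 : ℝ) (hφt0 : φ t0 = 0) :
    ∀ t, φ t = 0 := by
  obtain ⟨M, hM⟩ := hφbd
  have hφmeas : Measurable φ := hφc.measurable
  have hnn : ∀ (t s : ℝ) (τ : X), 0 ≤ K s τ * g (φ (t - s)) τ :=
    fun t s τ => mul_nonneg (hKnn s τ) (hgnn _ τ (hφnn _))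
  have hmeas : ∀ t : ℝ, Measurable fun p : ℝ × X => K p.1 p.2 * g (φ (t - p.1)) p.2 := by
    intro t
    exact hKmeas.mul (hgmeas.comp
      ((hφmeas.comp (measurable_const.sub measurable_fst)).prodMk measurable_snd))
  have hmeass : ∀ (t : ℝ) (τ : X), Measurable fun s => K s τ * g (φ (t - s)) τ :=
    fun t τ => (hmeas t).comp (measurable_id.prodMk measurable_const)
  -- per τ bound on g over range of φ
  have hC : ∀ τ : X, ∃ C : ℝ, ∀ u, 0 ≤ u → u ≤ M → g u τ ≤ C := by
    intro τ
    have hc : ContinuousOn (fun u => g u τ) (Icc 0 M) := (hgcont τ).mono Icc_subset_Ici_self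
    obtain ⟨C, hCb⟩ := (isCompact_Icc.image_of_continuousOn hc).bddAbove
    exact ⟨C, fun u h0 hMu => hCb (mem_image_of_mem _ ⟨h0, hMu⟩)⟩
  have hInner : ∀ t : ℝ, ∀ᵐ τ ∂μ, Integrable (fun s => K s τ * g (φ (t - s)) τ) volume := by
    intro t
    filter_upwards [hKint.prod_left_ae] with τ hτ
    obtain ⟨C, hCb⟩ := hC τ
    refine (hτ.const_mul C).mono' (hmeass t τ).aestronglyMeasurable (ae_of_all _ fun s => ?_)
    rw [Real.norm_eq_abs, abs_of_nonneg (hnn t s τ)]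
    calc K s τ * g (φ (t - s)) τ ≤ K s τ * C :=
          mul_le_mul_of_nonneg_left (hCb _ (hφnn _) (hM _)) (hKnn s τ)
      _ = C * K s τ := mul_comm _ _
  set G : ℝ → X → ENNReal := fun t τ => ∫⁻ s, ENNReal.ofReal (K s τ * g (φ (t - s)) τ) with hGdef
  have hGmeas : ∀ t, Measurable (G t) := by
    intro t
    exact (((hmeas t).comp measurable_swap).ennreal_ofReal).lintegral_prod_right'
  have hDF : ∀ t, 0 < φ t → ENNReal.ofReal (φ t) = ∫⁻ τ, G t τ ∂μ := by
    intro t ht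
    have hFnn : ∀ τ, 0 ≤ ∫ s, K s τ * g (φ (t - s)) τ :=
      fun τ => integral_nonneg fun s => hnn t s τ
    have hFint : Integrable (fun τ => ∫ s, K s τ * g (φ (t - s)) τ) μ := by
      by_contra hni
      rw [hφeq t, integral_undef hni] at ht
      exact lt_irrefl 0 ht
    rw [hφeq t, ofReal_integral_eq_lintegral_ofReal hFint (ae_of_all _ hFnn)]
    apply lintegral_congr_ae
    filter_upwards [hInner t] with τ hτ
    exact ofReal_integral_eq_lintegral_ofReal hτ (ae_of_all _ fun s => hnn t s τ)
  -- KEY lemma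
  have key : ∀ (c : ℝ) (u : ℕ → ℝ), Tendsto u atTop (𝓝 c) → (∀ n, 0 < φ (u n)) →
      φ c = 0 → False := by
    intro c u hu hupos hc0
    have hφu : Tendsto (fun n => φ (u n)) atTop (𝓝 0) := by
      have := (hφc.tendsto c).comp hu
      rwa [hc0] at this
    have hfatou1 : ∀ τ, G c τ ≤ liminf (fun n => G (u n) τ) atTop := by
      intro τ
      have hpt : ∀ s : ℝ, Tendsto (fun n => ENNReal.ofReal (K s τ * g (φ (u n - s)) τ)) atTop
          (𝓝 (ENNReal.ofReal (K s τ * g (φ (c - s)) τ))) := by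
        intro s
        apply ENNReal.tendsto_ofReal
        apply Tendsto.const_mul
        have hφt : Tendsto (fun n => φ (u n - s)) atTop (𝓝 (φ (c - s))) :=
          (hφc.tendsto _).comp (hu.sub tendsto_const_nhds)
        have hφt' : Tendsto (fun n => φ (u n - s)) atTop (𝓝[Ici 0] (φ (c - s))) :=
          tendsto_nhdsWithin_of_tendsto_nhds_of_eventually_within _ hφt
            (Eventually.of_forall fun n => hφnn _)
        exact ((hgcont τ (φ (c - s)) (hφnn _)).tendsto).comp hφt'
      calc G c τ = ∫⁻ s, liminf (fun n => ENNReal.ofReal (K s τ * g (φ (u n - s)) τ)) atTop :=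
            lintegral_congr fun s => ((hpt s).liminf_eq).symm
        _ ≤ liminf (fun n => G (u n) τ) atTop :=
            lintegral_liminf_le fun n => (hmeass (u n) τ).ennreal_ofReal
    have hzero : ∫⁻ τ, G c τ ∂μ = 0 := by
      have h2 : ∫⁻ τ, G c τ ∂μ ≤ liminf (fun n => ∫⁻ τ, G (u n) τ ∂μ) atTop :=
        le_trans (lintegral_mono hfatou1) (lintegral_liminf_le fun n => hGmeas (u n))
      have h3 : Tendsto (fun n => ∫⁻ τ, G (u n) τ ∂μ) atTop (𝓝 0) := by
        have heq : ∀ n, ∫⁻ τ, G (u n) τ ∂μ = ENNReal.ofReal (φ (u n)) :=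
          fun n => (hDF _ (hupos n)).symm
        simp_rw [heq]
        have := ENNReal.tendsto_ofReal hφu
        simpa using this
      rw [h3.liminf_eq] at h2
      exact le_antisymm h2 zero_le
    have hae : ∀ᵐ τ ∂μ, G c τ = 0 := (lintegral_eq_zero_iff (hGmeas c)).mp hzero
    obtain ⟨τ0, hτ0X, hGτ0⟩ : ∃ τ0 ∈ Xt, G c τ0 = 0 := by
      by_contra h
      push_neg at h
      have hsub : Xt ⊆ {τ | ¬ (G c τ = 0)} := fun τ hτ => h τ hτ
      exact absurd (measure_mono_null hsub (ae_iff.mp hae)) hXtpos.ne'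
    set a := A τ0 with ha
    have ha0 : 0 < a := hApos τ0 hτ0X
    have haes : ∀ᵐ s : ℝ, ENNReal.ofReal (K s τ0 * g (φ (c - s)) τ0) = 0 :=
      (lintegral_eq_zero_iff ((hmeass c τ0).ennreal_ofReal)).mp hGτ0
    have haes2 : ∀ᵐ s : ℝ, ¬ (s ∈ Ioo (-a) a ∧ 0 < φ (c - s)) := by
      filter_upwards [haes] with s hs
      rintro ⟨hsI, hne⟩
      have hK := hKposA τ0 hτ0X s hsI
      have hgne : g (φ (c - s)) τ0 ≠ 0 := by
        intro h0
        have := (hgz τ0 hτ0X _ (hφnn _)).mp h0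
        rw [this] at hne; exact lt_irrefl 0 hne
      have hpos : 0 < K s τ0 * g (φ (c - s)) τ0 :=
        mul_pos hK (lt_of_le_of_ne (hgnn _ _ (hφnn _)) (Ne.symm hgne))
      rw [ENNReal.ofReal_eq_zero] at hs
      linarith
    have hnull : volume {s : ℝ | s ∈ Ioo (-a) a ∧ 0 < φ (c - s)} = 0 := by
      have := ae_iff.mp haes2
      simpa only [not_not] using this
    -- get n with u n in (c-a, c+a)
    have hev : ∀ᶠ n in atTop, u n ∈ Ioo (c - a) (c + a) :=
      hu (Ioo_mem_nhds (by linarith) (by linarith))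
    obtain ⟨n, hn⟩ := hev.exists
    -- open set of positive measure inside the null set
    set V : Set ℝ := Ioo (-a) a ∩ (fun s => φ (c - s)) ⁻¹' (Ioi 0) with hV
    have hVopen : IsOpen V :=
      isOpen_Ioo.inter (isOpen_Ioi.preimage (hφc.comp (continuous_const.sub continuous_id)))
    have hVne : V.Nonempty := by
      refine ⟨c - u n, ⟨?_, ?_⟩, ?_⟩
      · simp only [mem_Ioo] at hn; linarith [hn.2]
      · simp only [mem_Ioo] at hn; linarith [hn.1]
      · show 0 < φ (c - (c - u n))
        simpa using hupos n
    have hVpos : 0 < volume V := hVopen.measure_pos volume hVne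
    have hVsub : V ⊆ {s : ℝ | s ∈ Ioo (-a) a ∧ 0 < φ (c - s)} := fun s hs => ⟨hs.1, hs.2⟩
    exact absurd (measure_mono_null hVsub hnull) hVpos.ne'
  -- main argument
  intro t
  by_contra hne
  have ht1 : 0 < φ t := lt_of_le_of_ne (hφnn t) (Ne.symm hne)
  rcases lt_trichotomy t0 t with hlt | heq | hgt
  · -- c = sup of zeros in [t0, t]
    set Z : Set ℝ := {x | φ x = 0} ∩ Icc t0 t with hZ
    have hZclosed : IsClosed Z := (isClosed_singleton.preimage hφc).inter isClosed_Icc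
    have hZne : Z.Nonempty := ⟨t0, hφt0, le_refl _, le_of_lt hlt⟩
    have hZbdd : BddAbove Z := ⟨t, fun x hx => hx.2.2⟩
    set c := sSup Z with hc
    have hcZ : c ∈ Z := hZclosed.csSup_mem hZne hZbdd
    have hct : c < t := lt_of_le_of_ne hcZ.2.2 (fun h => hne (by rw [← h]; exact hcZ.1))
    have h1 : ∀ n : ℕ, 0 < (1 : ℝ) / (n + 1) := fun n => by positivity
    have h2 : ∀ n : ℕ, (1 : ℝ) / (n + 1) ≤ 1 := fun n => by
      rw [div_le_one (by positivity)]; linarith [Nat.cast_nonneg (α := ℝ) n]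
    have hun : ∀ n : ℕ, c + (t - c) * (1 / (n + 1)) ∈ Ioc c t := by
      intro n
      constructor
      · have : 0 < (t - c) * (1 / (n + 1)) := mul_pos (by linarith) (h1 n)
        linarith
      · have : (t - c) * (1 / (n + 1)) ≤ (t - c) * 1 :=
          mul_le_mul_of_nonneg_left (h2 n) (by linarith)
        linarith
    refine key c (fun n => c + (t - c) * (1 / (n + 1))) ?_ ?_ hcZ.1
    · have h1' : Tendsto (fun n : ℕ => (t - c) * (1 / ((n : ℝ) + 1))) atTop (𝓝 0) := by
        have := tendsto_one_div_add_atTop_nhds_zero_nat.const_mul (t - c)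
        simpa using this
      have := h1'.const_add c
      simpa using this
    · intro n
      rcases (hφnn _).lt_or_eq with h | h
      · exact h
      · exfalso
        have hmem : c + (t - c) * (1 / (n + 1)) ∈ Z :=
          ⟨h.symm, le_trans hcZ.2.1 (le_of_lt (hun n).1), (hun n).2⟩
        exact absurd (le_csSup hZbdd hmem) (not_le.mpr (hun n).1)
  · exact hne (heq ▸ hφt0)
  · -- t < t0 : c = inf of zeros in [t, t0]
    set Z : Set ℝ := {x | φ x = 0} ∩ Icc t t0 with hZ
    have hZclosed : IsClosed Z := (isClosed_singleton.preimage hφc).inter isClosed_Icc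
    have hZne : Z.Nonempty := ⟨t0, hφt0, le_of_lt hgt, le_refl _⟩
    have hZbdd : BddBelow Z := ⟨t, fun x hx => hx.2.1⟩
    set c := sInf Z with hc
    have hcZ : c ∈ Z := hZclosed.csInf_mem hZne hZbdd
    have hct : t < c := lt_of_le_of_ne hcZ.2.1 (fun h => hne (by rw [h]; exact hcZ.1))
    have h1 : ∀ n : ℕ, 0 < (1 : ℝ) / (n + 1) := fun n => by positivity
    have h2 : ∀ n : ℕ, (1 : ℝ) / (n + 1) ≤ 1 := fun n => by
      rw [div_le_one (by positivity)]; linarith [Nat.cast_nonneg (α := ℝ) n]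
    have hun : ∀ n : ℕ, c - (c - t) * (1 / (n + 1)) ∈ Ico t c := by
      intro n
      constructor
      · have : (c - t) * (1 / (n + 1)) ≤ (c - t) * 1 :=
          mul_le_mul_of_nonneg_left (h2 n) (by linarith)
        linarith
      · have : 0 < (c - t) * (1 / (n + 1)) := mul_pos (by linarith) (h1 n)
        linarith
    refine key c (fun n => c - (c - t) * (1 / (n + 1))) ?_ ?_ hcZ.1
    · have h1' : Tendsto (fun n : ℕ => (c - t) * (1 / ((n : ℝ) + 1))) atTop (𝓝 0) := by
        have := tendsto_one_div_add_atTop_nhds_zero_nat.const_mul (c - t)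
        simpa using this
      have := h1'.const_sub c
      simpa using this
    · intro n
      rcases (hφnn _).lt_or_eq with h | h
      · exact h
      · exfalso
        have hmem : c - (c - t) * (1 / (n + 1)) ∈ Z :=
          ⟨h.symm, (hun n).1, le_trans (le_of_lt (hun n).2) hcZ.2.2⟩
        exact absurd (csInf_le hZbdd hmem) (not_le.mpr (hun n).2)
end

section
/- Assume χ(0) < 0 and conditions (C) and (N) hold. Then there exists ζ1 ∈ (0, ζ2) such that: (1) G is continuous from [0,∞) to [0,∞), G(s) > 0 for s > 0, and the limit lim_{s→0+} G(s)/s exists in (1, +∞]; (2) G([ζ1, ζ2]) ⊆ [ζ1, ζ2] and G([0,∞)) ⊆ [0, ζ2]; (3) min_{s ∈ [ζ1,ζ2]} G(s) = G(ζ1), while G(s) > s for all s ∈ (0, ζ1]. -/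
open MeasureTheory Filter Topology Set

theorem stmt4
    {X : Type*} [MeasurableSpace X] (μ : Measure X) [IsFiniteMeasure μ]
    (K : ℝ → X → ℝ) (g : ℝ → X → ℝ)
    (hKmeas : Measurable fun p : ℝ × X => K p.1 p.2)
    (hKnn : ∀ s τ, 0 ≤ K s τ)
    (hKint : Integrable (fun p : ℝ × X => K p.1 p.2) ((volume : Measure ℝ).prod μ))
    (hKpos : ∀ τ, 0 < ∫ s, K s τ)
    (hgmeas : Measurable fun p : ℝ × X => g p.1 p.2)
    (hg0 : ∀ τ, g 0 τ = 0)
    (hgnn : ∀ u τ, 0 ≤ u → 0 ≤ g u τ)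
    (hgcont : ∀ τ, ContinuousOn (fun u => g u τ) (Ici 0))
    (g' : X → ℝ) (hg'meas : Measurable g') (hg'pos : ∀ τ, 0 < g' τ)
    (hg'lim : ∀ τ, Tendsto (fun u => g u τ / u) (𝓝[>] 0) (𝓝 (g' τ)))
    (hC : ∀ δ : ℝ, 0 < δ → ∃ Cd : X → ℝ, Measurable Cd ∧ (∀ τ, 0 ≤ Cd τ) ∧
      (∀ τ, ∀ u ∈ Icc (0:ℝ) δ, g u τ ≤ Cd τ * u) ∧
      Integrable (fun τ => Cd τ * ∫ s, K s τ) μ)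
    (τ0 : X) (hτ0 : μ {τ0} = 1)
    (hmono : ∀ τ, τ ≠ τ0 → MonotoneOn (fun v => g v τ) (Ici 0))
    (hgτ0 : ∀ v, 0 < v → 0 < g v τ0)
    (S : ℝ) (hS : IsLUB ((fun v => g v τ0) '' Ici 0) S)
    (ζ2 : ℝ) (hζ2 : 0 < ζ2)
    (hΘmono : StrictMonoOn (fun v => v - ∫ τ in {τ0}ᶜ, (g v τ * ∫ s, K s τ) ∂μ) (Icc 0 ζ2))
    (hΘζ2 : (∫ s, K s τ0) * S < ζ2 - ∫ τ in {τ0}ᶜ, (g ζ2 τ * ∫ s, K s τ) ∂μ)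
    (G : ℝ → ℝ)
    (hGdef : ∀ v, 0 ≤ v → G v ∈ Icc 0 ζ2 ∧
      G v - (∫ τ in {τ0}ᶜ, (g (G v) τ * ∫ s, K s τ) ∂μ) = (∫ s, K s τ0) * g v τ0)
    (hχ0int : Integrable (fun p : ℝ × X => K p.1 p.2 * g' p.2) ((volume : Measure ℝ).prod μ))
    (hχ0 : 1 < ∫ τ, (∫ s, K s τ * g' τ) ∂μ)
    :
    ∃ ζ1 ∈ Ioo (0:ℝ) ζ2,
      (ContinuousOn G (Ici 0) ∧ (∀ s : ℝ, 0 < s → 0 < G s) ∧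
        ((∃ L : ℝ, 1 < L ∧ Tendsto (fun s => G s / s) (𝓝[>] 0) (𝓝 L)) ∨
          Tendsto (fun s => G s / s) (𝓝[>] 0) atTop)) ∧
      (MapsTo G (Icc ζ1 ζ2) (Icc ζ1 ζ2) ∧ MapsTo G (Ici 0) (Icc 0 ζ2)) ∧
      ((∀ s ∈ Icc ζ1 ζ2, G ζ1 ≤ G s) ∧ (∀ s ∈ Ioc (0:ℝ) ζ1, s < G s)) := by
  classical
  set Θ : ℝ → ℝ := fun v => v - ∫ τ in {τ0}ᶜ, (g v τ * ∫ s, K s τ) ∂μ with hΘdef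
  set C : ℝ := ∫ s, K s τ0 with hCdef
  have hCpos : 0 < C := hKpos τ0
  have hΘ0 : Θ 0 = 0 := by simp [hΘdef, hg0]
  have hGmem : ∀ v, 0 ≤ v → G v ∈ Icc 0 ζ2 := fun v hv => (hGdef v hv).1
  have hGeq : ∀ v, 0 ≤ v → Θ (G v) = C * g v τ0 := by
    intro v hv
    simpa [hΘdef] using (hGdef v hv).2
  have h0I : (0:ℝ) ∈ Icc (0:ℝ) ζ2 := ⟨le_rfl, hζ2.le⟩
  have hΘpos : ∀ w ∈ Ioc (0:ℝ) ζ2, 0 < Θ w := by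
    intro w hw
    have := hΘmono h0I ⟨hw.1.le, hw.2⟩ hw.1
    rwa [hΘ0] at this
  have hG0 : G 0 = 0 := by
    have h1 : Θ (G 0) = 0 := by rw [hGeq 0 le_rfl, hg0, mul_zero]
    exact hΘmono.injOn (hGmem 0 le_rfl) h0I (by rw [h1, hΘ0])
  have hGpos : ∀ s : ℝ, 0 < s → 0 < G s := by
    intro s hs
    rcases ((hGmem s hs.le).1).lt_or_eq with h | h
    · exact h
    · exfalso
      have h1 := hGeq s hs.le
      rw [← h, hΘ0] at h1
      exact absurd h1.symm (ne_of_gt (mul_pos hCpos (hgτ0 s hs)))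
  -- continuity of G
  have hGcont : ContinuousOn G (Ici 0) := by
    intro v₀ hv₀
    have hφ : ContinuousWithinAt (fun v => C * g v τ0) (Ici 0) v₀ :=
      (continuousOn_const.mul (hgcont τ0)) v₀ hv₀
    have hmem : ∀ᶠ v in 𝓝[Ici 0] v₀, v ∈ Ici (0:ℝ) := eventually_mem_nhdsWithin
    rw [ContinuousWithinAt]
    refine tendsto_order.2 ⟨?_, ?_⟩
    · intro a ha
      rcases lt_or_ge a 0 with h | h
      · filter_upwards [hmem] with v hv
        exact h.trans_le (hGmem v hv).1
      · have haI : a ∈ Icc (0:ℝ) ζ2 := ⟨h, ha.le.trans (hGmem v₀ hv₀).2⟩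
        have h1 : Θ a < Θ (G v₀) := hΘmono haI (hGmem v₀ hv₀) ha
        rw [hGeq v₀ hv₀] at h1
        filter_upwards [hφ.eventually_const_lt h1, hmem] with v hv1 hv2
        by_contra hle
        push_neg at hle
        have h2 : Θ (G v) ≤ Θ a := hΘmono.monotoneOn (hGmem v hv2) haI hle
        rw [hGeq v hv2] at h2
        exact absurd hv1 (not_lt.2 h2)
    · intro b hb
      rcases le_or_gt b ζ2 with h | h
      · have hbI : b ∈ Icc (0:ℝ) ζ2 := ⟨(hGmem v₀ hv₀).1.trans hb.le, h⟩
        have h1 : Θ (G v₀) < Θ b := hΘmono (hGmem v₀ hv₀) hbI hb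
        rw [hGeq v₀ hv₀] at h1
        filter_upwards [hφ.eventually_lt_const h1, hmem] with v hv1 hv2
        by_contra hle
        push_neg at hle
        have h2 : Θ b ≤ Θ (G v) := hΘmono.monotoneOn hbI (hGmem v hv2) hle
        rw [hGeq v hv2] at h2
        exact absurd hv1 (not_lt.2 h2)
      · filter_upwards [hmem] with v hv
        exact ((hGmem v hv).2).trans_lt h
  have hGt0 : Tendsto G (𝓝[>] 0) (𝓝 0) := by
    have h := hGcont 0 Set.self_mem_Ici
    rw [ContinuousWithinAt, hG0] at h
    exact h.mono_left (nhdsWithin_mono 0 Ioi_subset_Ici_self)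
  have hG0lim : Tendsto G (𝓝[>] 0) (𝓝[>] 0) :=
    tendsto_nhdsWithin_iff.2 ⟨hGt0, eventually_nhdsWithin_of_forall fun s hs => hGpos s hs⟩
  -- dominated convergence
  obtain ⟨Cd, hCdmeas, hCdnn, hCdbd, hCdint⟩ := hC 1 one_pos
  have hKintτ : Integrable (fun τ => ∫ s, K s τ) μ := hKint.integral_prod_right
  have hKτnn : ∀ τ, 0 ≤ ∫ s, K s τ := fun τ => (hKpos τ).le
  have hKτmeas : Measurable fun τ => ∫ s, K s τ :=
    (hKmeas.stronglyMeasurable.integral_prod_left').measurable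
  have hgslice : ∀ w : ℝ, Measurable (fun τ => g w τ) := fun w =>
    hgmeas.comp (measurable_const.prodMk measurable_id)
  set A : ℝ := ∫ τ in {τ0}ᶜ, (g' τ * ∫ s, K s τ) ∂μ with hAdef
  have hDCT : Tendsto (fun w => ∫ τ in {τ0}ᶜ, (g w τ * ∫ s, K s τ) / w ∂μ) (𝓝[>] 0) (𝓝 A) := by
    refine tendsto_integral_filter_of_dominated_convergence (fun τ => Cd τ * ∫ s, K s τ)
      (Eventually.of_forall fun w => (((hgslice w).mul hKτmeas).div_const w).aestronglyMeasurable)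
      ?_ hCdint.restrict (Eventually.of_forall fun τ => ?_)
    · filter_upwards [Ioc_mem_nhdsGT_of_mem (Set.mem_Ico.2 ⟨le_rfl, one_pos⟩)] with w hw
      refine Eventually.of_forall fun τ => ?_
      have hw0 : 0 < w := hw.1
      have h1 : g w τ ≤ Cd τ * w := hCdbd τ w ⟨hw0.le, hw.2⟩
      have h2 : 0 ≤ g w τ := hgnn w τ hw0.le
      rw [Real.norm_eq_abs, abs_of_nonneg (div_nonneg (mul_nonneg h2 (hKτnn τ)) hw0.le),
        div_le_iff₀ hw0]
      calc g w τ * ∫ s, K s τ ≤ (Cd τ * w) * ∫ s, K s τ :=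
            mul_le_mul_of_nonneg_right h1 (hKτnn τ)
        _ = Cd τ * (∫ s, K s τ) * w := by ring
    · have h := (hg'lim τ).mul_const (∫ s, K s τ)
      refine h.congr fun w => by ring
  have hΘdiv : Tendsto (fun w => Θ w / w) (𝓝[>] 0) (𝓝 (1 - A)) := by
    have h1 : Tendsto (fun w => 1 - ∫ τ in {τ0}ᶜ, (g w τ * ∫ s, K s τ) / w ∂μ) (𝓝[>] 0)
        (𝓝 (1 - A)) := tendsto_const_nhds.sub hDCT
    refine h1.congr' ?_
    filter_upwards [self_mem_nhdsWithin] with w hw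
    have hw0 : (w:ℝ) ≠ 0 := ne_of_gt hw
    simp only [hΘdef]
    rw [integral_div, sub_div, div_self hw0]
  have hA1 : A ≤ 1 := by
    have hev : ∀ᶠ w in 𝓝[>] (0:ℝ), 0 ≤ Θ w / w := by
      filter_upwards [Ioc_mem_nhdsGT_of_mem (Set.mem_Ico.2 ⟨le_rfl, hζ2⟩)] with w hw
      exact (div_pos (hΘpos w hw) hw.1).le
    have := ge_of_tendsto hΘdiv hev
    linarith
  -- the chi(0) < 0 inequality
  have hfmeas : Measurable (fun τ => (∫ s, K s τ) * g' τ) := hKτmeas.mul hg'meas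
  have hfeq : (fun τ => ∫ s, K s τ * g' τ) = fun τ => (∫ s, K s τ) * g' τ := by
    funext τ
    exact integral_mul_const (g' τ) (fun s => K s τ)
  have hfint : Integrable (fun τ => (∫ s, K s τ) * g' τ) μ :=
    hfeq ▸ hχ0int.integral_prod_right
  have hfnn : ∀ τ, 0 ≤ (∫ s, K s τ) * g' τ := fun τ => mul_nonneg (hKτnn τ) (hg'pos τ).le
  have hχ0' : 1 < ∫ τ, (∫ s, K s τ) * g' τ ∂μ := by
    rwa [hfeq] at hχ0
  set T := toMeasurable μ {τ0} with hTdef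
  have hTm : MeasurableSet T := measurableSet_toMeasurable μ {τ0}
  have hτ0T : τ0 ∈ T := subset_toMeasurable μ {τ0} rfl
  have hμT : μ T = 1 := by rw [hTdef, measure_toMeasurable, hτ0]
  have hnull : μ (T ∩ {x | (∫ s, K s x) * g' x ≠ C * g' τ0}) = 0 := by
    set S' := T ∩ {x | (∫ s, K s x) * g' x ≠ C * g' τ0} with hS'def
    have hS'm : MeasurableSet S' :=
      hTm.inter (hfmeas (measurableSet_singleton (C * g' τ0))).compl
    have hsub : {τ0} ⊆ T \ S' := by
      intro x hx
      rcases hx with rfl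
      exact ⟨hτ0T, fun hS => hS.2 rfl⟩
    have h1 : (1:ENNReal) ≤ μ (T \ S') := hτ0 ▸ measure_mono hsub
    have h2 : μ (T ∩ S') + μ (T \ S') = μ T := measure_inter_add_diff T hS'm
    rw [inter_eq_self_of_subset_right inter_subset_left, hμT] at h2
    by_contra hne
    have h4 : (1:ENNReal) < 1 + μ S' := ENNReal.lt_add_right ENNReal.one_ne_top hne
    have h5 : 1 + μ S' ≤ μ (T \ S') + μ S' := add_le_add_left h1 _
    have h6 := h4.trans_le h5
    rw [add_comm, h2] at h6
    exact lt_irrefl _ h6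
  have hae : ∀ᵐ x ∂μ, x ∈ T → (∫ s, K s x) * g' x = C * g' τ0 := by
    rw [ae_iff]
    refine measure_mono_null ?_ hnull
    intro x hx
    simp only [Set.mem_setOf_eq, Classical.not_imp] at hx
    exact ⟨hx.1, hx.2⟩
  have hTint : ∫ τ in T, ((∫ s, K s τ) * g' τ) ∂μ = C * g' τ0 := by
    rw [setIntegral_congr_ae hTm hae, setIntegral_const, measureReal_def, hμT]
    simp
  have hsplit : ∫ τ, (∫ s, K s τ) * g' τ ∂μ
      = (∫ τ in T, ((∫ s, K s τ) * g' τ) ∂μ) + ∫ τ in Tᶜ, ((∫ s, K s τ) * g' τ) ∂μ :=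
    (integral_add_compl hTm hfint).symm
  have hmono2 : ∫ τ in Tᶜ, ((∫ s, K s τ) * g' τ) ∂μ ≤ ∫ τ in {τ0}ᶜ, ((∫ s, K s τ) * g' τ) ∂μ := by
    refine setIntegral_mono_set hfint.integrableOn (Eventually.of_forall hfnn) ?_
    exact HasSubset.Subset.eventuallyLE (compl_subset_compl.2 (subset_toMeasurable μ {τ0}))
  have hAcomm : A = ∫ τ in {τ0}ᶜ, ((∫ s, K s τ) * g' τ) ∂μ := by
    rw [hAdef]
    exact integral_congr_ae (Eventually.of_forall fun τ => mul_comm _ _)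
  have hχ : 1 - A < C * g' τ0 := by
    have h := hsplit
    rw [hTint] at h
    have h2 : ∫ τ, (∫ s, K s τ) * g' τ ∂μ ≤ C * g' τ0 + A := by
      rw [h, hAcomm]
      linarith [hmono2]
    linarith [hχ0']
  -- limit of G s / s
  have hP : Tendsto (fun s => Θ (G s) / s) (𝓝[>] 0) (𝓝 (C * g' τ0)) := by
    have base : Tendsto (fun s => C * (g s τ0 / s)) (𝓝[>] 0) (𝓝 (C * g' τ0)) :=
      (hg'lim τ0).const_mul C
    refine base.congr' ?_
    filter_upwards [self_mem_nhdsWithin] with s hs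
    rw [hGeq s (le_of_lt hs), mul_div_assoc]
  have hΘGne : ∀ s : ℝ, 0 < s → Θ (G s) ≠ 0 := fun s hs => by
    rw [hGeq s hs.le]
    exact (mul_pos hCpos (hgτ0 s hs)).ne'
  have hratio : ∀ᶠ s in 𝓝[>] (0:ℝ), (Θ (G s) / G s)⁻¹ * (Θ (G s) / s) = G s / s := by
    filter_upwards [self_mem_nhdsWithin] with s hs
    have h1 := hΘGne s hs
    have h2 := (hGpos s hs).ne'
    field_simp
  have hkey : (∃ L : ℝ, 1 < L ∧ Tendsto (fun s => G s / s) (𝓝[>] 0) (𝓝 L)) ∨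
      Tendsto (fun s => G s / s) (𝓝[>] 0) atTop := by
    rcases hA1.lt_or_eq with hAlt | hAeq
    · left
      have hpos : 0 < 1 - A := by linarith
      have hinv : Tendsto (fun w => (Θ w / w)⁻¹) (𝓝[>] 0) (𝓝 (1 - A)⁻¹) :=
        hΘdiv.inv₀ (ne_of_gt hpos)
      have hcomp : Tendsto (fun s => (Θ (G s) / G s)⁻¹) (𝓝[>] 0) (𝓝 (1 - A)⁻¹) :=
        hinv.comp hG0lim
      have hmul := hcomp.mul hP
      refine ⟨(1 - A)⁻¹ * (C * g' τ0), ?_, hmul.congr' hratio⟩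
      have h := (one_lt_div hpos).2 hχ
      rwa [div_eq_inv_mul] at h
    · right
      have h0 : Tendsto (fun w => Θ w / w) (𝓝[>] 0) (𝓝[>] 0) := by
        refine tendsto_nhdsWithin_iff.2 ⟨?_, ?_⟩
        · have : (1:ℝ) - A = 0 := by rw [← hAeq]; ring
          rwa [this] at hΘdiv
        · filter_upwards [Ioc_mem_nhdsGT_of_mem (Set.mem_Ico.2 ⟨le_rfl, hζ2⟩)] with w hw
          exact div_pos (hΘpos w hw) hw.1
      have hinv : Tendsto (fun w => (Θ w / w)⁻¹) (𝓝[>] 0) atTop :=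
        tendsto_inv_nhdsGT_zero.comp h0
      have hcomp : Tendsto (fun s => (Θ (G s) / G s)⁻¹) (𝓝[>] 0) atTop :=
        hinv.comp hG0lim
      have hmul := hcomp.atTop_mul_pos (mul_pos hCpos (hg'pos τ0)) hP
      exact hmul.congr' hratio
  -- find small interval where G s > s
  have hev1 : ∀ᶠ s in 𝓝[>] (0:ℝ), 1 < G s / s := by
    rcases hkey with ⟨L, hL, hT⟩ | hT
    · exact hT.eventually_const_lt hL
    · exact hT.eventually_gt_atTop 1
  obtain ⟨u, hu, husub⟩ := mem_nhdsGT_iff_exists_Ioc_subset.1 hev1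
  have hδpos : 0 < min u ζ2 := lt_min hu hζ2
  have hid : ∀ s : ℝ, 0 < s → s ≤ min u ζ2 → s < G s := by
    intro s hs hsle
    have h1 : 1 < G s / s := husub ⟨hs, hsle.trans (min_le_left _ _)⟩
    exact (one_lt_div hs).1 h1
  -- first crossing point
  set E := {t : ℝ | t ∈ Ioc (0:ℝ) ζ2 ∧ G t ≤ t} with hEdef
  have hζ2E : ζ2 ∈ E := ⟨⟨hζ2, le_rfl⟩, (hGmem ζ2 hζ2.le).2⟩
  have hEbdd : BddBelow E := ⟨0, fun t ht => ht.1.1.le⟩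
  set c := sInf E with hcdef
  have hcle : c ≤ ζ2 := csInf_le hEbdd hζ2E
  have hδc : min u ζ2 ≤ c := by
    refine le_csInf ⟨ζ2, hζ2E⟩ fun t ht => ?_
    by_contra hlt
    push_neg at hlt
    exact absurd ht.2 (not_le.2 (hid t ht.1.1 hlt.le))
  have hcpos : 0 < c := lt_of_lt_of_le hδpos hδc
  have hGgtc : ∀ s : ℝ, 0 < s → s < c → s < G s := by
    intro s hs hsc
    by_contra h
    push_neg at h
    have : s ∈ E := ⟨⟨hs, hsc.le.trans hcle⟩, h⟩
    exact absurd (csInf_le hEbdd this) (not_le.2 hsc)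
  -- minimum of G on [c, ζ2]
  have hsub2 : Icc c ζ2 ⊆ Ici (0:ℝ) := fun x hx => le_trans hcpos.le hx.1
  obtain ⟨pt, hptmem, hptmin⟩ :=
    isCompact_Icc.exists_isMinOn ⟨c, le_rfl, hcle⟩ (hGcont.mono hsub2)
  set η := G pt with hηdef
  have hηpos : 0 < η := hGpos pt (lt_of_lt_of_le hcpos hptmem.1)
  -- the point ζ1
  set B := {t : ℝ | t ∈ Icc (0:ℝ) c ∧ G t ≤ η / 2} with hBdef
  have hBclosed : IsClosed B := by
    have hBeq : B = Icc (0:ℝ) c ∩ G ⁻¹' Iic (η / 2) := rfl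
    rw [hBeq]
    exact (hGcont.mono fun x hx => hx.1).preimage_isClosed_of_isClosed isClosed_Icc isClosed_Iic
  have hB0 : (0:ℝ) ∈ B := ⟨⟨le_rfl, hcpos.le⟩, by rw [hG0]; positivity⟩
  have hBbdd : BddAbove B := ⟨c, fun t ht => ht.1.2⟩
  set ζ1 := sSup B with hζ1def
  have hζ1B : ζ1 ∈ B := hBclosed.csSup_mem ⟨0, hB0⟩ hBbdd
  have hζ1c : ζ1 ≤ c := hζ1B.1.2
  have hGζ1 : G ζ1 ≤ η / 2 := hζ1B.2
  have hζ1ltc : ζ1 < c := by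
    refine lt_of_le_of_ne hζ1c fun h => ?_
    have h1 : G c ≤ η / 2 := h ▸ hGζ1
    have h2 : η ≤ G c := (isMinOn_iff.1 hptmin) c ⟨le_rfl, hcle⟩
    linarith
  have hζ1pos : 0 < ζ1 := by
    have hev2 : ∀ᶠ s in 𝓝[>] (0:ℝ), G s < η / 2 := hGt0.eventually_lt_const (half_pos hηpos)
    have hev3 : ∀ᶠ s in 𝓝[>] (0:ℝ), s ∈ Ioo (0:ℝ) c :=
      Ioo_mem_nhdsGT hcpos
    obtain ⟨s0, hs0a, hs0b⟩ := (hev2.and hev3).exists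
    have hs0B : s0 ∈ B := ⟨⟨hs0b.1.le, hs0b.2.le⟩, hs0a.le⟩
    exact lt_of_lt_of_le hs0b.1 (le_csSup hBbdd hs0B)
  have hζ1G : ζ1 < G ζ1 := hGgtc ζ1 hζ1pos hζ1ltc
  have hminprop : ∀ s ∈ Icc ζ1 ζ2, G ζ1 ≤ G s := by
    rintro s ⟨hs1, hs2⟩
    rcases le_or_gt c s with h | h
    · have h1 : η ≤ G s := (isMinOn_iff.1 hptmin) s ⟨h, hs2⟩
      linarith
    · rcases hs1.eq_or_lt with rfl | hlt
      · exact le_rfl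
      · have hsB : s ∉ B := fun hs => absurd (le_csSup hBbdd hs) (not_le.2 hlt)
        have h1 : ¬ (G s ≤ η / 2) := fun hle => hsB ⟨⟨le_trans hζ1pos.le hs1, h.le⟩, hle⟩
        push_neg at h1
        linarith
  refine ⟨ζ1, ⟨hζ1pos, lt_of_lt_of_le hζ1ltc hcle⟩, ⟨hGcont, hGpos, hkey⟩, ⟨?_, ?_⟩,
    hminprop, ?_⟩
  · intro s hs
    refine ⟨le_of_lt (lt_of_lt_of_le hζ1G (hminprop s hs)), ?_⟩
    exact (hGmem s (le_trans hζ1pos.le hs.1)).2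
  · intro s hs
    exact hGmem s hs
  · intro s hs
    exact hGgtc s hs.1 (lt_of_le_of_lt hs.2 hζ1ltc)
end

section
/- Assume condition (C) holds. Then every bounded solution φ of the convolution equation (17) is uniformly continuous on ℝ; more precisely, with δ := sup_{t∈ℝ} φ(t), for all t, h ∈ ℝ one has |φ(t+h) − φ(t)| ≤ δ · ∫_X C_δ(τ) (∫_ℝ |K(s+h,τ) − K(s,τ)| ds) dμ(τ), and this bound tends to 0 as h → 0. -/
open MeasureTheory Filter Topology Set

lemma l1_translation_tendsto (f : ℝ → ℝ) (hf : Integrable f (volume : Measure ℝ)) :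
    Tendsto (fun h : ℝ => ∫ s, |f (s + h) - f s|) (𝓝 0) (𝓝 0) := by
  set F : Lp ℝ 1 (volume : Measure ℝ) := hf.toL1 f with hF
  set T : ℝ → {g : C(ℝ, ℝ) // MeasurePreserving g volume volume} :=
    fun h => ⟨⟨fun s => s + h, by continuity⟩, measurePreserving_add_right volume h⟩ with hT
  have hTc : Continuous T := by
    apply Continuous.subtype_mk
    refine ContinuousMap.continuous_of_continuous_uncurry _ ?_
    have : Continuous (Function.uncurry fun (x y : ℝ) => y + x) :=
      continuous_snd.add continuous_fst
    exact this
  set G : ℝ → Lp ℝ 1 (volume : Measure ℝ) :=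
    fun h => Lp.compMeasurePreserving (T h).1 (T h).2 F with hG
  have hGc : Continuous G := by
    have := Lp.compMeasurePreserving_continuous (volume : Measure ℝ) (volume : Measure ℝ) ℝ
      (p := 1) (by norm_num)
    exact this.comp (continuous_const.prodMk hTc)
  have hGae : ∀ h : ℝ, (G h : ℝ → ℝ) =ᵐ[volume] fun s => f (s + h) := by
    intro h
    have h1 : (G h : ℝ → ℝ) =ᵐ[volume] (F : ℝ → ℝ) ∘ (fun s => s + h) :=
      Lp.coeFn_compMeasurePreserving F (T h).2
    have h2 : (F : ℝ → ℝ) ∘ (fun s => s + h) =ᵐ[volume] f ∘ (fun s => s + h) :=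
      (measurePreserving_add_right volume h).quasiMeasurePreserving.ae_eq_comp hf.coeFn_toL1
    exact h1.trans h2
  have hdist : ∀ h : ℝ, dist (G h) (G 0) = ∫ s, |f (s + h) - f s| := by
    intro h
    rw [L1.dist_eq_integral_dist]
    refine integral_congr_ae ?_
    filter_upwards [hGae h, hGae 0] with s h1 h2
    rw [h1, h2, Real.dist_eq, add_zero]
  have : Tendsto (fun h : ℝ => dist (G h) (G 0)) (𝓝 0) (𝓝 (dist (G 0) (G 0))) :=
    ((continuous_dist.comp (hGc.prodMk continuous_const)).tendsto 0)
  rw [dist_self] at this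
  exact this.congr fun h => hdist h

theorem stmt7
    {X : Type*} [MeasurableSpace X] (μ : Measure X) [IsFiniteMeasure μ]
    (K : ℝ → X → ℝ) (g : ℝ → X → ℝ)
    (hKmeas : Measurable fun p : ℝ × X => K p.1 p.2)
    (hKnn : ∀ s τ, 0 ≤ K s τ)
    (hKint : Integrable (fun p : ℝ × X => K p.1 p.2) ((volume : Measure ℝ).prod μ))
    (hKpos : ∀ τ, 0 < ∫ s, K s τ)
    (hgmeas : Measurable fun p : ℝ × X => g p.1 p.2)
    (hg0 : ∀ τ, g 0 τ = 0)
    (hgnn : ∀ u τ, 0 ≤ u → 0 ≤ g u τ)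
    (hgcont : ∀ τ, ContinuousOn (fun u => g u τ) (Ici 0))
    (φ : ℝ → ℝ) (hφc : Continuous φ)
    (hφnn : ∀ t, 0 ≤ φ t)
    (hφbd : ∃ M, ∀ t, φ t ≤ M)
    (hφeq : ∀ t, φ t = ∫ τ, (∫ s, K s τ * g (φ (t - s)) τ) ∂μ)
    (δ : ℝ) (hδ : δ = sSup (Set.range φ))
    (Cd : X → ℝ) (hCdm : Measurable Cd) (hCdnn : ∀ τ, 0 ≤ Cd τ)
    (hCdbd : ∀ τ, ∀ u ∈ Icc (0:ℝ) δ, g u τ ≤ Cd τ * u)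
    (hCdint : Integrable (fun τ => Cd τ * ∫ s, K s τ) μ) :
    UniformContinuous φ ∧
    (∀ t h : ℝ, |φ (t + h) - φ t| ≤ δ * ∫ τ, (Cd τ * ∫ s, |K (s + h) τ - K s τ|) ∂μ) ∧
    Tendsto (fun h : ℝ => δ * ∫ τ, (Cd τ * ∫ s, |K (s + h) τ - K s τ|) ∂μ) (𝓝 0) (𝓝 0) := by
  obtain ⟨M, hM⟩ := hφbd
  have hbdd : BddAbove (Set.range φ) := ⟨M, by rintro _ ⟨t, rfl⟩; exact hM t⟩
  have hφδ : ∀ t, φ t ≤ δ := fun t => hδ ▸ le_csSup hbdd (mem_range_self t)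
  have hδ0 : 0 ≤ δ := le_trans (hφnn 0) (hφδ 0)
  have hKae : ∀ᵐ τ ∂μ, Integrable (fun s => K s τ) (volume : Measure ℝ) :=
    hKint.prod_left_ae
  have hφm : Measurable φ := hφc.measurable
  have hq_nn : ∀ (r : ℝ) τ, 0 ≤ g (φ r) τ := fun r τ => hgnn _ τ (hφnn r)
  have hq_le : ∀ (r : ℝ) τ, g (φ r) τ ≤ Cd τ * δ := fun r τ =>
    (hCdbd τ (φ r) ⟨hφnn r, hφδ r⟩).trans (mul_le_mul_of_nonneg_left (hφδ r) (hCdnn τ))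
  -- measurability of inner integrands, jointly in (s, τ)
  have hKh : ∀ h : ℝ, Measurable fun p : ℝ × X => K (p.1 + h) p.2 := fun h =>
    hKmeas.comp ((measurable_fst.add_const h).prodMk measurable_snd)
  have hgφ : ∀ t : ℝ, Measurable fun p : ℝ × X => g (φ (t - p.1)) p.2 := fun t =>
    hgmeas.comp ((hφm.comp (measurable_const.sub measurable_fst)).prodMk measurable_snd)
  have hmulh : ∀ t h : ℝ, Measurable fun p : ℝ × X => K (p.1 + h) p.2 * g (φ (t - p.1)) p.2 :=
    fun t h => (hKh h).mul (hgφ t)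
  -- the difference kernel, measurable in (s, τ) and in τ after integration
  have hΔmeas : ∀ h : ℝ, Measurable fun p : ℝ × X => |K (p.1 + h) p.2 - K p.1 p.2| :=
    fun h => ((hKh h).sub hKmeas).abs
  have hΔm : ∀ h : ℝ, AEStronglyMeasurable
      (fun τ => Cd τ * ∫ s, |K (s + h) τ - K s τ|) μ := by
    intro h
    exact (hCdm.aestronglyMeasurable.mul
      (((hΔmeas h).stronglyMeasurable.integral_prod_left' (μ := volume)).aestronglyMeasurable))
  -- a.e. bound for the difference integrals
  have hΔle : ∀ h : ℝ, ∀ᵐ τ ∂μ, (∫ s, |K (s + h) τ - K s τ|) ≤ 2 * ∫ s, K s τ := by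
    intro h
    filter_upwards [hKae] with τ hKτ
    have h1 : Integrable (fun s => K (s + h) τ) (volume : Measure ℝ) := hKτ.comp_add_right h
    calc (∫ s, |K (s + h) τ - K s τ|) ≤ ∫ s, (K (s + h) τ + K s τ) := by
          refine integral_mono_of_nonneg (ae_of_all _ fun s => abs_nonneg _) (h1.add hKτ)
            (ae_of_all _ fun s => ?_)
          have := abs_sub (K (s + h) τ) (K s τ)
          rwa [abs_of_nonneg (hKnn _ τ), abs_of_nonneg (hKnn s τ)] at this
      _ = 2 * ∫ s, K s τ := by
          rw [integral_add h1 hKτ, integral_add_right_eq_self (fun s => K s τ) h]; ring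
  have hΔbd : ∀ h : ℝ, ∀ᵐ τ ∂μ,
      ‖Cd τ * ∫ s, |K (s + h) τ - K s τ|‖ ≤ 2 * (Cd τ * ∫ s, K s τ) := by
    intro h
    filter_upwards [hΔle h] with τ hle
    have hnn : 0 ≤ ∫ s, |K (s + h) τ - K s τ| :=
      integral_nonneg fun s => abs_nonneg _
    rw [Real.norm_eq_abs, abs_of_nonneg (mul_nonneg (hCdnn τ) hnn)]
    calc Cd τ * ∫ s, |K (s + h) τ - K s τ| ≤ Cd τ * (2 * ∫ s, K s τ) :=
          mul_le_mul_of_nonneg_left hle (hCdnn τ)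
      _ = 2 * (Cd τ * ∫ s, K s τ) := by ring
  have HΔ : ∀ h : ℝ, Integrable (fun τ => Cd τ * ∫ s, |K (s + h) τ - K s τ|) μ := fun h =>
    Integrable.mono' (hCdint.const_mul 2) (hΔm h) (hΔbd h)
  -- The key estimate
  have key : ∀ t h : ℝ, |φ (t + h) - φ t| ≤ δ * ∫ τ, (Cd τ * ∫ s, |K (s + h) τ - K s τ|) ∂μ := by
    intro t h
    -- inner integrability for a.e. τ
    have hI : ∀ᵐ τ ∂μ, Integrable (fun s => K s τ * g (φ (t - s)) τ) (volume : Measure ℝ) ∧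
        Integrable (fun s => K (s + h) τ * g (φ (t - s)) τ) (volume : Measure ℝ) := by
      filter_upwards [hKae] with τ hKτ
      have msτ : ∀ h' : ℝ, AEStronglyMeasurable
          (fun s => K (s + h') τ * g (φ (t - s)) τ) (volume : Measure ℝ) := by
        intro h'
        exact ((hmulh t h').comp (measurable_id.prodMk measurable_const)).aestronglyMeasurable
      constructor
      · refine Integrable.mono' (hKτ.mul_const (Cd τ * δ)) ?_ (ae_of_all _ fun s => ?_)
        · simpa using msτ 0
        · rw [Real.norm_eq_abs, abs_of_nonneg (mul_nonneg (hKnn s τ) (hq_nn _ τ))]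
          exact mul_le_mul_of_nonneg_left (hq_le _ τ) (hKnn s τ)
      · refine Integrable.mono' ((hKτ.comp_add_right h).mul_const (Cd τ * δ)) (msτ h)
          (ae_of_all _ fun s => ?_)
        rw [Real.norm_eq_abs, abs_of_nonneg (mul_nonneg (hKnn _ τ) (hq_nn _ τ))]
        exact mul_le_mul_of_nonneg_left (hq_le _ τ) (hKnn _ τ)
    -- outer integrability
    have J : Integrable (fun τ => ∫ s, K s τ * g (φ (t - s)) τ) μ := by
      refine Integrable.mono' (hCdint.const_mul δ)
        ((((hmulh t 0).stronglyMeasurable.integral_prod_left'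
          (μ := volume)).aestronglyMeasurable).congr
          (Eventually.of_forall fun τ => by simp)) ?_
      filter_upwards [hKae] with τ hKτ
      rw [Real.norm_eq_abs,
        abs_of_nonneg (integral_nonneg fun s => mul_nonneg (hKnn s τ) (hq_nn _ τ))]
      calc (∫ s, K s τ * g (φ (t - s)) τ) ≤ ∫ s, K s τ * (Cd τ * δ) :=
            integral_mono_of_nonneg
              (ae_of_all _ fun s => mul_nonneg (hKnn s τ) (hq_nn _ τ))
              (hKτ.mul_const _)
              (ae_of_all _ fun s => mul_le_mul_of_nonneg_left (hq_le _ τ) (hKnn s τ))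
        _ = δ * (Cd τ * ∫ s, K s τ) := by rw [integral_mul_const]; ring
    have Jh : Integrable (fun τ => ∫ s, K (s + h) τ * g (φ (t - s)) τ) μ := by
      refine Integrable.mono' (hCdint.const_mul δ)
        (((hmulh t h).stronglyMeasurable.integral_prod_left' (μ := volume)).aestronglyMeasurable) ?_
      filter_upwards [hKae] with τ hKτ
      rw [Real.norm_eq_abs,
        abs_of_nonneg (integral_nonneg fun s => mul_nonneg (hKnn _ τ) (hq_nn _ τ))]
      calc (∫ s, K (s + h) τ * g (φ (t - s)) τ) ≤ ∫ s, K (s + h) τ * (Cd τ * δ) :=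
            integral_mono_of_nonneg
              (ae_of_all _ fun s => mul_nonneg (hKnn _ τ) (hq_nn _ τ))
              ((hKτ.comp_add_right h).mul_const _)
              (ae_of_all _ fun s => mul_le_mul_of_nonneg_left (hq_le _ τ) (hKnn _ τ))
        _ = (∫ s, K (s + h) τ) * (Cd τ * δ) := integral_mul_const _ _
        _ = δ * (Cd τ * ∫ s, K s τ) := by
            rw [integral_add_right_eq_self (fun s => K s τ) h]; ring
    -- rewrite φ (t + h)
    have e1 : φ (t + h) = ∫ τ, (∫ s, K (s + h) τ * g (φ (t - s)) τ) ∂μ := by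
      rw [hφeq (t + h)]
      refine integral_congr_ae (Eventually.of_forall fun τ => ?_)
      have e := integral_add_right_eq_self (μ := volume)
        (fun s => K s τ * g (φ (t + h - s)) τ) h
      try simp only [] at e
      show (∫ s, K s τ * g (φ (t + h - s)) τ) = ∫ s, K (s + h) τ * g (φ (t - s)) τ
      rw [← e]
      refine integral_congr_ae (Eventually.of_forall fun s => ?_)
      have hts : t + h - (s + h) = t - s := by ring
      simp [hts]
    -- the difference as a single integral
    have e2 : φ (t + h) - φ t
        = ∫ τ, (∫ s, (K (s + h) τ - K s τ) * g (φ (t - s)) τ) ∂μ := by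
      rw [e1, hφeq t, ← integral_sub Jh J]
      refine integral_congr_ae ?_
      filter_upwards [hI] with τ ⟨h1, h2⟩
      rw [← integral_sub h2 h1]
      refine integral_congr_ae (Eventually.of_forall fun s => ?_)
      ring
    rw [e2]
    calc |∫ τ, (∫ s, (K (s + h) τ - K s τ) * g (φ (t - s)) τ) ∂μ|
        ≤ ∫ τ, |∫ s, (K (s + h) τ - K s τ) * g (φ (t - s)) τ| ∂μ := by
          simpa [Real.norm_eq_abs] using
            norm_integral_le_integral_norm
              (fun τ => ∫ s, (K (s + h) τ - K s τ) * g (φ (t - s)) τ) (μ := μ)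
      _ ≤ ∫ τ, δ * (Cd τ * ∫ s, |K (s + h) τ - K s τ|) ∂μ := by
          refine integral_mono_of_nonneg (ae_of_all _ fun τ => abs_nonneg _)
            ((HΔ h).const_mul δ) ?_
          filter_upwards [hKae] with τ hKτ
          have hΔint : Integrable (fun s => |K (s + h) τ - K s τ|) (volume : Measure ℝ) :=
            ((hKτ.comp_add_right h).sub hKτ).abs
          calc |∫ s, (K (s + h) τ - K s τ) * g (φ (t - s)) τ|
              ≤ ∫ s, |K (s + h) τ - K s τ| * |g (φ (t - s)) τ| := by
                simpa [Real.norm_eq_abs, abs_mul] using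
                  norm_integral_le_integral_norm
                    (fun s => (K (s + h) τ - K s τ) * g (φ (t - s)) τ)
                    (μ := (volume : Measure ℝ))
            _ ≤ ∫ s, |K (s + h) τ - K s τ| * (Cd τ * δ) := by
                refine integral_mono_of_nonneg
                  (ae_of_all _ fun s => mul_nonneg (abs_nonneg _) (abs_nonneg _))
                  (hΔint.mul_const _) (ae_of_all _ fun s => ?_)
                show |K (s + h) τ - K s τ| * |g (φ (t - s)) τ|
                  ≤ |K (s + h) τ - K s τ| * (Cd τ * δ)
                rw [abs_of_nonneg (hq_nn _ τ)]
                exact mul_le_mul_of_nonneg_left (hq_le _ τ) (abs_nonneg _)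
            _ = δ * (Cd τ * ∫ s, |K (s + h) τ - K s τ|) := by
                rw [integral_mul_const]; ring
      _ = δ * ∫ τ, (Cd τ * ∫ s, |K (s + h) τ - K s τ|) ∂μ := integral_const_mul δ _
  -- Part 3
  have part3 : Tendsto (fun h : ℝ => δ * ∫ τ, (Cd τ * ∫ s, |K (s + h) τ - K s τ|) ∂μ)
      (𝓝 0) (𝓝 0) := by
    have h3 : Tendsto (fun h : ℝ => ∫ τ, (Cd τ * ∫ s, |K (s + h) τ - K s τ|) ∂μ)
        (𝓝 0) (𝓝 0) := by
      have := tendsto_integral_filter_of_dominated_convergence (μ := μ) (l := 𝓝 (0 : ℝ))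
        (F := fun h τ => Cd τ * ∫ s, |K (s + h) τ - K s τ|) (f := fun _ => (0 : ℝ))
        (bound := fun τ => 2 * (Cd τ * ∫ s, K s τ))
        (Eventually.of_forall fun h => hΔm h)
        (Eventually.of_forall fun h => hΔbd h)
        (hCdint.const_mul 2) ?_
      · simpa using this
      · filter_upwards [hKae] with τ hKτ
        simpa using (l1_translation_tendsto _ hKτ).const_mul (Cd τ)
    simpa using h3.const_mul δ
  refine ⟨?_, key, part3⟩
  -- Part 1: uniform continuity
  rw [Metric.uniformContinuous_iff]
  intro ε hε
  have h1 : ∀ᶠ y : ℝ in 𝓝 0, y < ε := Iio_mem_nhds hε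
  have hev : ∀ᶠ h : ℝ in 𝓝 0,
      δ * ∫ τ, (Cd τ * ∫ s, |K (s + h) τ - K s τ|) ∂μ < ε := part3.eventually h1
  obtain ⟨η, hη, hball⟩ := Metric.eventually_nhds_iff.mp hev
  refine ⟨η, hη, fun {x y} hxy => ?_⟩
  have hd : dist (x - y) (0 : ℝ) < η := by
    rw [Real.dist_eq, sub_zero]
    rw [Real.dist_eq] at hxy
    exact hxy
  have hb := hball hd
  have hx : φ x = φ (y + (x - y)) := by ring_nf
  calc dist (φ x) (φ y) = |φ (y + (x - y)) - φ y| := by rw [Real.dist_eq, ← hx]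
    _ ≤ δ * ∫ τ, (Cd τ * ∫ s, |K (s + (x - y)) τ - K s τ|) ∂μ := key y (x - y)
    _ < ε := hb
end

section
/- Let k : ℝ × X → [0,∞) be measurable and integrable on ℝ × X with 1 < ∫_X ∫_ℝ k(s,τ) ds dμ(τ) < ∞ (in the paper, k(s,τ) = K(s,τ) g'(0,τ)). Then the only bounded continuous function y : ℝ → [0,∞) satisfying the linear convolution equation y(t) = ∫_X (∫_ℝ k(s,τ) y(t−s) ds) dμ(τ) for all t ∈ ℝ is y ≡ 0. -/
open MeasureTheory Filter Topology Set
open scoped ENNReal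

private lemma lintegral_eq_iSup_abs {α : Type*} [MeasurableSpace α] (ν : Measure α)
    (f : α → ℝ≥0∞) (hf : Measurable f) (e : α → ℝ) (he : Measurable e) :
    ∫⁻ a, f a ∂ν = ⨆ n : ℕ, ∫⁻ a in {x | |e x| ≤ (n:ℝ)}, f a ∂ν := by
  have hS : ∀ n : ℕ, MeasurableSet {x | |e x| ≤ (n:ℝ)} := fun n =>
    measurableSet_le he.abs measurable_const
  have h1 : ∀ a, f a = ⨆ n : ℕ, ({x | |e x| ≤ (n:ℝ)}).indicator f a := by
    intro a
    refine le_antisymm ?_ (iSup_le fun n => Set.indicator_le_self _ _ a)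
    refine le_trans (le_of_eq ?_) (le_iSup _ ⌈|e a|⌉₊)
    rw [Set.indicator_of_mem]
    exact Set.mem_setOf.mpr (Nat.le_ceil _)
  calc ∫⁻ a, f a ∂ν = ∫⁻ a, ⨆ n : ℕ, ({x | |e x| ≤ (n:ℝ)}).indicator f a ∂ν :=
        lintegral_congr h1
    _ = ⨆ n : ℕ, ∫⁻ a, ({x | |e x| ≤ (n:ℝ)}).indicator f a ∂ν := by
        refine lintegral_iSup (fun n => hf.indicator (hS n)) ?_
        intro m n hmn
        refine Set.indicator_le_indicator_of_subset (fun x hx => ?_) (fun _ => zero_le')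
        exact le_trans hx (by exact_mod_cast hmn : ((m:ℝ) ≤ n))
    _ = ⨆ n : ℕ, ∫⁻ a in {x | |e x| ≤ (n:ℝ)}, f a ∂ν := by
        refine iSup_congr fun n => ?_
        rw [lintegral_indicator (hS n) f]

theorem stmt8
    {X : Type*} [MeasurableSpace X] (μ : Measure X) [IsFiniteMeasure μ]
    (k : ℝ → X → ℝ)
    (hkmeas : Measurable fun p : ℝ × X => k p.1 p.2)
    (hknn : ∀ s τ, 0 ≤ k s τ)
    (hkint : Integrable (fun p : ℝ × X => k p.1 p.2) ((volume : Measure ℝ).prod μ))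
    (hkgt : 1 < ∫ τ, (∫ s, k s τ) ∂μ)
    (y : ℝ → ℝ) (hyc : Continuous y) (hynn : ∀ t, 0 ≤ y t)
    (hybd : ∃ M, ∀ t, y t ≤ M)
    (hyeq : ∀ t, y t = ∫ τ, (∫ s, k s τ * y (t - s)) ∂μ)
    :
    ∀ t, y t = 0 := by
  classical
  obtain ⟨M, hM⟩ := hybd
  have hM0 : 0 ≤ M := le_trans (hynn 0) (hM 0)
  set Y : ℝ → ℝ≥0∞ := fun t => ENNReal.ofReal (y t) with hYdef
  have hYmeas : Measurable Y := (hyc.measurable).ennreal_ofReal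
  have hYle : ∀ t, Y t ≤ ENNReal.ofReal M := fun t => ENNReal.ofReal_le_ofReal (hM t)
  set π := μ.prod (volume : Measure ℝ) with hπ
  set K' : X × ℝ → ℝ≥0∞ := fun p => ENNReal.ofReal (k p.2 p.1) with hK'
  have hkswap : Integrable (fun p : X × ℝ => k p.2 p.1) π := hkint.swap
  have hK'meas : Measurable K' := (hkmeas.comp measurable_swap).ennreal_ofReal
  -- master equation in lintegral form
  have hmaster : ∀ t, Y t = ∫⁻ p, K' p * Y (t - p.2) ∂π := by
    intro t
    have hfmeas : Measurable (fun p : X × ℝ => k p.2 p.1 * y (t - p.2)) :=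
      (hkmeas.comp measurable_swap).mul
        ((hyc.measurable).comp (measurable_const.sub measurable_snd))
    have hfint : Integrable (fun p : X × ℝ => k p.2 p.1 * y (t - p.2)) π := by
      refine Integrable.mono' (hkswap.const_mul M) hfmeas.aestronglyMeasurable ?_
      filter_upwards with p
      rw [Real.norm_eq_abs, abs_of_nonneg (mul_nonneg (hknn _ _) (hynn _))]
      calc k p.2 p.1 * y (t - p.2) ≤ k p.2 p.1 * M :=
            mul_le_mul_of_nonneg_left (hM _) (hknn _ _)
        _ = M * k p.2 p.1 := mul_comm _ _
    have h1 : y t = ∫ p, k p.2 p.1 * y (t - p.2) ∂π :=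
      (hyeq t).trans (integral_prod _ hfint).symm
    have h2 := ofReal_integral_eq_lintegral_ofReal hfint
      (Filter.Eventually.of_forall fun p => mul_nonneg (hknn _ _) (hynn _))
    calc Y t = ENNReal.ofReal (∫ p, k p.2 p.1 * y (t - p.2) ∂π) := by rw [hYdef, ← h1]
      _ = ∫⁻ p, ENNReal.ofReal (k p.2 p.1 * y (t - p.2)) ∂π := h2
      _ = ∫⁻ p, K' p * Y (t - p.2) ∂π := by
          refine lintegral_congr fun p => ?_
          rw [ENNReal.ofReal_mul (hknn _ _)]
  -- total kernel mass
  have hc'eq : (∫⁻ p, K' p ∂π) = ENNReal.ofReal (∫ τ, (∫ s, k s τ) ∂μ) := by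
    have h := ofReal_integral_eq_lintegral_ofReal hkswap
      (Filter.Eventually.of_forall fun p => hknn _ _)
    rw [integral_prod _ hkswap] at h
    exact h.symm
  have hc'gt : 1 < ∫⁻ p, K' p ∂π := by
    rw [hc'eq]; exact ENNReal.one_lt_ofReal.mpr hkgt
  have hc'lt : (∫⁻ p, K' p ∂π) < ⊤ := by rw [hc'eq]; exact ENNReal.ofReal_lt_top
  -- choose truncation radius R
  have hex : ∃ n : ℕ, 1 < ∫⁻ p in {x : X × ℝ | |x.2| ≤ (n:ℝ)}, K' p ∂π := by
    have h := lintegral_eq_iSup_abs π K' hK'meas (fun p => p.2) measurable_snd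
    rw [h] at hc'gt
    exact lt_iSup_iff.mp hc'gt
  obtain ⟨n, hn⟩ := hex
  set R : ℝ := (n : ℝ) with hRdef
  have hR0 : (0:ℝ) ≤ R := Nat.cast_nonneg n
  set S : Set (X × ℝ) := {x : X × ℝ | |x.2| ≤ R} with hSdef
  have hSmeas : MeasurableSet S := measurableSet_le (measurable_snd.abs) measurable_const
  have hcRlt : (∫⁻ p in S, K' p ∂π) < ⊤ :=
    lt_of_le_of_lt (setLIntegral_le_lintegral _ _) hc'lt
  -- shift of window integrals
  have hshift : ∀ (s T : ℝ),
      ∫⁻ t in Icc (-T) T, Y (t - s) = ∫⁻ u in Icc (-T - s) (T - s), Y u := by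
    intro s T
    rw [← lintegral_indicator measurableSet_Icc, ← lintegral_indicator measurableSet_Icc]
    have h : ∀ t, (Icc (-T) T).indicator (fun t => Y (t - s)) t
        = (Icc (-T - s) (T - s)).indicator Y (t - s) := by
      intro t
      by_cases h : t ∈ Icc (-T) T
      · have hm : t - s ∈ Icc (-T - s) (T - s) := by
          simp only [mem_Icc] at h ⊢
          constructor <;> linarith [h.1, h.2]
        rw [Set.indicator_of_mem h, Set.indicator_of_mem hm]
      · have hm : t - s ∉ Icc (-T - s) (T - s) := by
          simp only [mem_Icc] at h ⊢
          intro hc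
          exact h ⟨by linarith [hc.1], by linarith [hc.2]⟩
        rw [Set.indicator_of_notMem h, Set.indicator_of_notMem hm]
    rw [lintegral_congr h]
    exact lintegral_sub_right_eq_self ((Icc (-T - s) (T - s)).indicator Y) s
  -- losing at most M*R when shifting the window by s with |s| ≤ R
  have hFbound : ∀ T : ℝ, ∀ s : ℝ, |s| ≤ R →
      (∫⁻ t in Icc (-T) T, Y t)
        ≤ (∫⁻ u in Icc (-T - s) (T - s), Y u) + ENNReal.ofReal M * ENNReal.ofReal R := by
    intro T s hs
    have hdmeas : MeasurableSet (Icc (-T) T \ Icc (-T - s) (T - s)) :=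
      measurableSet_Icc.diff measurableSet_Icc
    have hdiff : volume (Icc (-T) T \ Icc (-T - s) (T - s)) ≤ ENNReal.ofReal R := by
      rcases le_or_gt 0 s with h0 | h0
      · have hsub : Icc (-T) T \ Icc (-T - s) (T - s) ⊆ Ioc (T - s) T := by
          intro t ht
          have h1 := ht.1
          have h2 := ht.2
          simp only [mem_Icc] at h1
          have h3 : T - s < t := by
            by_contra hcon
            push_neg at hcon
            exact h2 ⟨by linarith [h1.1], hcon⟩
          exact mem_Ioc.mpr ⟨h3, h1.2⟩
        calc volume (Icc (-T) T \ Icc (-T - s) (T - s)) ≤ volume (Ioc (T - s) T) :=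
              measure_mono hsub
          _ ≤ ENNReal.ofReal R := by
              rw [Real.volume_Ioc]
              refine ENNReal.ofReal_le_ofReal ?_
              have : s ≤ R := le_trans (le_abs_self s) hs
              linarith
      · have hsub : Icc (-T) T \ Icc (-T - s) (T - s) ⊆ Ico (-T) (-T - s) := by
          intro t ht
          have h1 := ht.1
          have h2 := ht.2
          simp only [mem_Icc] at h1
          have h3 : t < -T - s := by
            by_contra hcon
            push_neg at hcon
            exact h2 ⟨hcon, by linarith [h1.2]⟩
          exact mem_Ico.mpr ⟨h1.1, h3⟩
        calc volume (Icc (-T) T \ Icc (-T - s) (T - s)) ≤ volume (Ico (-T) (-T - s)) :=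
              measure_mono hsub
          _ ≤ ENNReal.ofReal R := by
              rw [Real.volume_Ico]
              refine ENNReal.ofReal_le_ofReal ?_
              have : -s ≤ R := le_trans (neg_le_abs s) hs
              linarith
    calc ∫⁻ t in Icc (-T) T, Y t
        ≤ ∫⁻ t in (Icc (-T - s) (T - s)) ∪ (Icc (-T) T \ Icc (-T - s) (T - s)), Y t := by
          refine lintegral_mono_set (fun t ht => ?_)
          by_cases h : t ∈ Icc (-T - s) (T - s)
          · exact Or.inl h
          · exact Or.inr ⟨ht, h⟩
      _ ≤ (∫⁻ u in Icc (-T - s) (T - s), Y u)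
            + ∫⁻ t in Icc (-T) T \ Icc (-T - s) (T - s), Y t := lintegral_union_le _ _ _
      _ ≤ (∫⁻ u in Icc (-T - s) (T - s), Y u) + ENNReal.ofReal M * ENNReal.ofReal R := by
          refine add_le_add_right ?_ _
          calc ∫⁻ t in Icc (-T) T \ Icc (-T - s) (T - s), Y t
              ≤ ∫⁻ _ in Icc (-T) T \ Icc (-T - s) (T - s), ENNReal.ofReal M :=
                setLIntegral_mono' hdmeas (fun t _ => hYle t)
            _ = ENNReal.ofReal M * volume (Icc (-T) T \ Icc (-T - s) (T - s)) := by
                rw [setLIntegral_const, mul_comm]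
            _ ≤ ENNReal.ofReal M * ENNReal.ofReal R := mul_le_mul_right hdiff _
  have hFfin : ∀ T : ℝ, (∫⁻ t in Icc (-T) T, Y t) < ⊤ := by
    intro T
    calc ∫⁻ t in Icc (-T) T, Y t ≤ ∫⁻ _ in Icc (-T) T, ENNReal.ofReal M :=
          setLIntegral_mono' measurableSet_Icc (fun t _ => hYle t)
      _ = ENNReal.ofReal M * volume (Icc (-T) T) := by rw [setLIntegral_const, mul_comm]
      _ < ⊤ := by
          rw [Real.volume_Icc]
          exact ENNReal.mul_lt_top ENNReal.ofReal_lt_top ENNReal.ofReal_lt_top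
  -- key inequality
  have hkey : ∀ T : ℝ,
      (∫⁻ p in S, K' p ∂π) *
          ((∫⁻ t in Icc (-T) T, Y t) - ENNReal.ofReal M * ENNReal.ofReal R)
        ≤ ∫⁻ t in Icc (-T) T, Y t := by
    intro T
    have hunc : Measurable (fun q : ℝ × (X × ℝ) => K' q.2 * Y (q.1 - q.2.2)) :=
      (hK'meas.comp measurable_snd).mul
        (hYmeas.comp (measurable_fst.sub (measurable_snd.comp measurable_snd)))
    have hswap : ∫⁻ t in Icc (-T) T, Y t
        = ∫⁻ p, K' p * (∫⁻ t in Icc (-T) T, Y (t - p.2)) ∂π := by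
      calc ∫⁻ t in Icc (-T) T, Y t
          = ∫⁻ t in Icc (-T) T, ∫⁻ p, K' p * Y (t - p.2) ∂π :=
            lintegral_congr fun t => hmaster t
        _ = ∫⁻ p, (∫⁻ t in Icc (-T) T, K' p * Y (t - p.2)) ∂π :=
            lintegral_lintegral_swap hunc.aemeasurable
        _ = ∫⁻ p, K' p * (∫⁻ t in Icc (-T) T, Y (t - p.2)) ∂π :=
            lintegral_congr fun p => lintegral_const_mul' _ _ ENNReal.ofReal_ne_top
    have hsubfin : ((∫⁻ t in Icc (-T) T, Y t) - ENNReal.ofReal M * ENNReal.ofReal R) ≠ ⊤ :=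
      (lt_of_le_of_lt (tsub_le_self) (hFfin T)).ne
    calc (∫⁻ p in S, K' p ∂π) *
          ((∫⁻ t in Icc (-T) T, Y t) - ENNReal.ofReal M * ENNReal.ofReal R)
        = ∫⁻ p in S, K' p *
            ((∫⁻ t in Icc (-T) T, Y t) - ENNReal.ofReal M * ENNReal.ofReal R) ∂π :=
          (lintegral_mul_const' _ _ hsubfin).symm
      _ ≤ ∫⁻ p in S, K' p * (∫⁻ t in Icc (-T) T, Y (t - p.2)) ∂π := by
          refine setLIntegral_mono' hSmeas (fun p hp => ?_)
          refine mul_le_mul_right ?_ _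
          rw [hshift p.2 T]
          exact tsub_le_iff_right.mpr (hFbound T p.2 hp)
      _ ≤ ∫⁻ p, K' p * (∫⁻ t in Icc (-T) T, Y (t - p.2)) ∂π :=
          setLIntegral_le_lintegral _ _
      _ = ∫⁻ t in Icc (-T) T, Y t := hswap.symm
  -- uniform bound on window integrals
  have hcr1 : 1 < (∫⁻ p in S, K' p ∂π).toReal := by
    have := (ENNReal.toReal_lt_toReal (by simp) hcRlt.ne).mpr hn
    simpa using this
  set cr : ℝ := (∫⁻ p in S, K' p ∂π).toReal with hcrdef
  set B : ℝ := max (M * R) (cr * (M * R) / (cr - 1)) with hBdef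
  have hFB : ∀ T : ℝ, (∫⁻ t in Icc (-T) T, Y t) ≤ ENNReal.ofReal B := by
    intro T
    have hfin := hFfin T
    rcases le_total (∫⁻ t in Icc (-T) T, Y t) (ENNReal.ofReal (M * R)) with h | h
    · exact le_trans h (ENNReal.ofReal_le_ofReal (le_max_left _ _))
    · have hkey' := hkey T
      rw [← ENNReal.ofReal_mul hM0] at hkey'
      have h2 : cr * ((∫⁻ t in Icc (-T) T, Y t).toReal - M * R)
          ≤ (∫⁻ t in Icc (-T) T, Y t).toReal := by
        have hsub : ((∫⁻ t in Icc (-T) T, Y t) - ENNReal.ofReal (M * R)).toReal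
            = (∫⁻ t in Icc (-T) T, Y t).toReal - M * R := by
          rw [ENNReal.toReal_sub_of_le h hfin.ne,
            ENNReal.toReal_ofReal (mul_nonneg hM0 hR0)]
        have hmono := ENNReal.toReal_mono hfin.ne hkey'
        rw [ENNReal.toReal_mul, hsub] at hmono
        exact hmono
      have h3 : M * R ≤ (∫⁻ t in Icc (-T) T, Y t).toReal := by
        have hmono := ENNReal.toReal_mono hfin.ne h
        rwa [ENNReal.toReal_ofReal (mul_nonneg hM0 hR0)] at hmono
      have h4 : (∫⁻ t in Icc (-T) T, Y t).toReal ≤ cr * (M * R) / (cr - 1) := by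
        have hc1 : (0:ℝ) < cr - 1 := by linarith
        rw [le_div_iff₀ hc1]
        nlinarith
      calc (∫⁻ t in Icc (-T) T, Y t)
          = ENNReal.ofReal (∫⁻ t in Icc (-T) T, Y t).toReal :=
            (ENNReal.ofReal_toReal hfin.ne).symm
        _ ≤ ENNReal.ofReal B := ENNReal.ofReal_le_ofReal (le_trans h4 (le_max_right _ _))
  -- y is (Lebesgue) integrable over ℝ
  have hJle : (∫⁻ t, Y t) ≤ ENNReal.ofReal B := by
    rw [lintegral_eq_iSup_abs volume Y hYmeas id measurable_id]
    refine iSup_le fun m => ?_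
    have hseteq : {x : ℝ | |id x| ≤ (m:ℝ)} = Icc (-(m:ℝ)) (m:ℝ) := by
      ext x; simp [abs_le]
    rw [hseteq]
    exact hFB m
  have hJfin : (∫⁻ t, Y t) ≠ ⊤ := (lt_of_le_of_lt hJle ENNReal.ofReal_lt_top).ne
  -- fixed point equation over all of ℝ
  have hunc : Measurable (fun q : ℝ × (X × ℝ) => K' q.2 * Y (q.1 - q.2.2)) :=
    (hK'meas.comp measurable_snd).mul
      (hYmeas.comp (measurable_fst.sub (measurable_snd.comp measurable_snd)))
  have hJfix : ∫⁻ t, Y t = (∫⁻ p, K' p ∂π) * ∫⁻ t, Y t := by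
    calc ∫⁻ t, Y t = ∫⁻ t, ∫⁻ p, K' p * Y (t - p.2) ∂π := lintegral_congr hmaster
      _ = ∫⁻ p, (∫⁻ t, K' p * Y (t - p.2)) ∂π := lintegral_lintegral_swap hunc.aemeasurable
      _ = ∫⁻ p, K' p * (∫⁻ t, Y (t - p.2)) ∂π :=
          lintegral_congr fun p => lintegral_const_mul' _ _ ENNReal.ofReal_ne_top
      _ = ∫⁻ p, K' p * (∫⁻ t, Y t) ∂π := by
          refine lintegral_congr fun p => ?_
          rw [lintegral_sub_right_eq_self Y p.2]
      _ = (∫⁻ p, K' p ∂π) * ∫⁻ t, Y t := lintegral_mul_const' _ _ hJfin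
  have hJ0 : ∫⁻ t, Y t = 0 := by
    by_contra h
    have hlt : ∫⁻ t, Y t < (∫⁻ p, K' p ∂π) * ∫⁻ t, Y t := by
      calc ∫⁻ t, Y t = 1 * ∫⁻ t, Y t := (one_mul _).symm
        _ < (∫⁻ p, K' p ∂π) * ∫⁻ t, Y t :=
          ENNReal.mul_lt_mul_left h hJfin hc'gt
    exact hlt.ne hJfix
  have hae : ∀ᵐ t, Y t = 0 := (lintegral_eq_zero_iff hYmeas).mp hJ0
  have hae' : y =ᵐ[volume] (fun _ => (0:ℝ)) := by
    filter_upwards [hae] with t ht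
    exact le_antisymm (ENNReal.ofReal_eq_zero.mp ht) (hynn t)
  have hy0 : y = fun _ => 0 := (hyc.ae_eq_iff_eq volume continuous_const).mp hae'
  intro t
  rw [hy0]
end

section
/- Let k : ℝ × X → [0,∞) be measurable and integrable on ℝ × X, and let N > 0 be such that ρ_N := ∫_X ∫_{−N}^{N} k(s,τ) ds dμ(τ) > 1. Then every bounded continuous function y : ℝ → [0,∞) satisfying y(t) = ∫_X (∫_ℝ k(s,τ) y(t−s) ds) dμ(τ) for all t ∈ ℝ satisfies, for all t' < t, ∫_{t'}^{t} y(v) dv ≤ 2 (∫_X ∫_{−N}^{N} |s| k(s,τ) ds dμ(τ)) / (ρ_N − 1); in particular y is Lebesgue integrable on ℝ. -/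
open MeasureTheory Filter Topology Set

open scoped ENNReal

theorem stmt9_aux_zero
    {X : Type*} [MeasurableSpace X] (μ : Measure X) [IsFiniteMeasure μ]
    (k : ℝ → X → ℝ)
    (hkmeas : Measurable fun p : ℝ × X => k p.1 p.2)
    (hknn : ∀ s τ, 0 ≤ k s τ)
    (hkint : Integrable (fun p : ℝ × X => k p.1 p.2) ((volume : Measure ℝ).prod μ))
    (N : ℝ) (hN : 0 < N)
    (hρ : 1 < ∫ τ, (∫ s in Icc (-N) N, k s τ) ∂μ)
    (y : ℝ → ℝ) (hyc : Continuous y) (hynn : ∀ t, 0 ≤ y t)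
    (hybd : ∃ M, ∀ t, y t ≤ M)
    (hyeq : ∀ t, y t = ∫ τ, (∫ s, k s τ * y (t - s)) ∂μ) :
    ∀ t, y t = 0 := by
  obtain ⟨M, hM⟩ := hybd
  have hM0 : 0 ≤ M := le_trans (hynn 0) (hM 0)
  set ν : Measure (ℝ × X) := (volume : Measure ℝ).prod μ with hν
  set g : ℝ → ℝ≥0∞ := fun t => ENNReal.ofReal (y t) with hgdef
  set K : ℝ × X → ℝ≥0∞ := fun p => ENNReal.ofReal (k p.1 p.2) with hKdef
  have hgmeas : Measurable g := ENNReal.measurable_ofReal.comp hyc.measurable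
  have hKmeas : Measurable K := ENNReal.measurable_ofReal.comp hkmeas
  -- the total mass of k is finite
  have hκfin : ∫⁻ p, K p ∂ν < ⊤ := by
    have h1 := (hasFiniteIntegral_iff_norm _).mp hkint.2
    refine lt_of_le_of_lt (le_of_eq ?_) h1
    refine lintegral_congr fun p => ?_
    rw [Real.norm_eq_abs, abs_of_nonneg (hknn _ _)]
  -- integrability of the convolution integrand
  have hfm : ∀ t : ℝ, Measurable fun p : ℝ × X => k p.1 p.2 * y (t - p.1) := fun t =>
    hkmeas.mul (hyc.measurable.comp (measurable_const.sub measurable_fst))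
  have hfint : ∀ t : ℝ, Integrable (fun p : ℝ × X => k p.1 p.2 * y (t - p.1)) ν := by
    intro t
    refine (hkint.const_mul M).mono' (hfm t).aestronglyMeasurable ?_
    filter_upwards with p
    rw [Real.norm_eq_abs, abs_of_nonneg (mul_nonneg (hknn _ _) (hynn _)), mul_comm M]
    exact mul_le_mul_of_nonneg_left (hM _) (hknn _ _)
  -- the convolution equation, in ℝ≥0∞ form
  have L1 : ∀ t, g t = ∫⁻ p, K p * g (t - p.1) ∂ν := by
    intro t
    have hfint' : Integrable
        (Function.uncurry fun s τ => k s τ * y (t - s)) ν := hfint t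
    have e1 : y t = ∫ p, k p.1 p.2 * y (t - p.1) ∂ν := by
      rw [hyeq t, ← integral_integral_swap hfint']
      exact (integral_prod _ (hfint t)).symm
    calc g t = ENNReal.ofReal (∫ p, k p.1 p.2 * y (t - p.1) ∂ν) := by
          rw [hgdef]; exact congrArg ENNReal.ofReal e1
      _ = ∫⁻ p, ENNReal.ofReal (k p.1 p.2 * y (t - p.1)) ∂ν :=
          ofReal_integral_eq_lintegral_ofReal (hfint t)
            (Eventually.of_forall fun p => mul_nonneg (hknn _ _) (hynn _))
      _ = ∫⁻ p, K p * g (t - p.1) ∂ν :=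
          lintegral_congr fun p => ENNReal.ofReal_mul (hknn _ _)
  -- measurability for Tonelli swaps
  have hprodmeas : Measurable (fun z : ℝ × (ℝ × X) => K z.2 * g (z.1 - z.2.1)) :=
    (hKmeas.comp measurable_snd).mul
      (hgmeas.comp (measurable_fst.sub (measurable_fst.comp measurable_snd)))
  have hgsubmeas : ∀ s : ℝ, Measurable fun v : ℝ => g (v - s) := fun s =>
    hgmeas.comp (measurable_id.sub measurable_const)
  -- integrated convolution equation over intervals
  have L2 : ∀ a b : ℝ, ∫⁻ v in Ioc a b, g v
      = ∫⁻ p, K p * (∫⁻ u in Ioc (a - p.1) (b - p.1), g u) ∂ν := by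
    intro a b
    calc ∫⁻ v in Ioc a b, g v = ∫⁻ v in Ioc a b, ∫⁻ p, K p * g (v - p.1) ∂ν :=
          lintegral_congr fun v => L1 v
      _ = ∫⁻ p, (∫⁻ v in Ioc a b, K p * g (v - p.1)) ∂ν :=
          lintegral_lintegral_swap hprodmeas.aemeasurable
      _ = ∫⁻ p, K p * (∫⁻ v in Ioc a b, g (v - p.1)) ∂ν :=
          lintegral_congr fun p => lintegral_const_mul _ (hgsubmeas p.1)
      _ = ∫⁻ p, K p * (∫⁻ u in Ioc (a - p.1) (b - p.1), g u) ∂ν := by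
          refine lintegral_congr fun p => ?_
          congr 1
          have hpre : (fun v : ℝ => v - p.1) ⁻¹' Ioc (a - p.1) (b - p.1) = Ioc a b := by
            ext v
            simp [sub_lt_sub_iff_right, sub_le_sub_iff_right]
          have := (measurePreserving_sub_right volume p.1).setLIntegral_comp_preimage
            (s := Ioc (a - p.1) (b - p.1)) measurableSet_Ioc hgmeas
          rw [hpre] at this
          exact this
  -- pointwise bound on g
  have hgleM : ∀ v, g v ≤ ENNReal.ofReal M := fun v => ENNReal.ofReal_le_ofReal (hM v)
  have hsmall : ∀ c d : ℝ, ∫⁻ v in Ioc c d, g v ≤ ENNReal.ofReal M * ENNReal.ofReal (d - c) := by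
    intro c d
    calc ∫⁻ v in Ioc c d, g v ≤ ∫⁻ _ in Ioc c d, ENNReal.ofReal M :=
          lintegral_mono fun v => hgleM v
      _ = ENNReal.ofReal M * volume (Ioc c d) := setLIntegral_const _ _
      _ = ENNReal.ofReal M * ENNReal.ofReal (d - c) := by rw [Real.volume_Ioc]
  have hJfin : ∀ a b : ℝ, (∫⁻ v in Ioc a b, g v) ≠ ⊤ := by
    intro a b
    exact (lt_of_le_of_lt (hsmall a b)
      (ENNReal.mul_lt_top ENNReal.ofReal_lt_top ENNReal.ofReal_lt_top)).ne
  -- the restricted kernel mass ρ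
  set S : Set (ℝ × X) := Icc (-N) N ×ˢ (univ : Set X) with hSdef
  have hSmeas : MeasurableSet S := measurableSet_Icc.prod MeasurableSet.univ
  set ρ : ℝ≥0∞ := ∫⁻ p in S, K p ∂ν with hρdef
  have hρfin : ρ ≠ ⊤ := (lt_of_le_of_lt (setLIntegral_le_lintegral _ _) hκfin).ne
  have hre : (volume.restrict (Icc (-N) N)).prod μ = ν.restrict S := by
    rw [hSdef, ← Measure.prod_restrict, Measure.restrict_univ]
  have hρgt : 1 < ρ := by
    have hres : Integrable (fun p : ℝ × X => k p.1 p.2)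
        ((volume.restrict (Icc (-N) N)).prod μ) := by
      rw [hre]; exact hkint.restrict
    have houter : Integrable (fun τ => ∫ s in Icc (-N) N, k s τ) μ := by
      have := hres.integral_prod_right
      simpa using this
    have key : ENNReal.ofReal (∫ τ, (∫ s in Icc (-N) N, k s τ) ∂μ) ≤ ρ := by
      calc ENNReal.ofReal (∫ τ, (∫ s in Icc (-N) N, k s τ) ∂μ)
          = ∫⁻ τ, ENNReal.ofReal (∫ s in Icc (-N) N, k s τ) ∂μ :=
            ofReal_integral_eq_lintegral_ofReal houter
              (Eventually.of_forall fun τ => integral_nonneg fun s => hknn s τ)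
        _ ≤ ∫⁻ τ, (∫⁻ s in Icc (-N) N, ENNReal.ofReal (k s τ)) ∂μ := by
            refine lintegral_mono fun τ => ?_
            by_cases hτ : Integrable (fun s => k s τ) (volume.restrict (Icc (-N) N))
            · exact le_of_eq (ofReal_integral_eq_lintegral_ofReal hτ
                (Eventually.of_forall fun s => hknn s τ))
            · rw [integral_undef hτ]; simp
        _ = ρ := by
            rw [hρdef, ← hre]
            exact (lintegral_prod_symm _ hKmeas.aemeasurable).symm
    calc (1 : ℝ≥0∞) = ENNReal.ofReal 1 := ENNReal.ofReal_one.symm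
      _ < ENNReal.ofReal (∫ τ, (∫ s in Icc (-N) N, k s τ) ∂μ) :=
          (ENNReal.ofReal_lt_ofReal_iff (lt_trans one_pos hρ)).2 hρ
      _ ≤ ρ := key
  -- main uniform bound on interval integrals of g
  set c : ℝ≥0∞ := ENNReal.ofReal M * ENNReal.ofReal N with hcdef
  have hcfin : c ≠ ⊤ := (ENNReal.mul_lt_top ENNReal.ofReal_lt_top ENNReal.ofReal_lt_top).ne
  set B : ℝ≥0∞ := (c + c) * ρ / (ρ - 1) with hBdef
  have hρsub0 : ρ - 1 ≠ 0 := (tsub_pos_of_lt hρgt).ne'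
  have hρsubfin : ρ - 1 ≠ ⊤ := ENNReal.sub_ne_top hρfin
  have hBfin : B < ⊤ := by
    refine ENNReal.div_lt_top ?_ hρsub0
    exact ENNReal.mul_ne_top (ENNReal.add_ne_top.mpr ⟨hcfin, hcfin⟩) hρfin
  have hB : ∀ a b : ℝ, ∫⁻ v in Ioc a b, g v ≤ B := by
    intro a b
    set J : ℝ≥0∞ := ∫⁻ v in Ioc a b, g v with hJdef
    have hJne : J ≠ ⊤ := hJfin a b
    have hsubset : ∀ s : ℝ, |s| ≤ N →
        Ioc a b ⊆ Ioc (a - s) (b - s) ∪ (Ioc a (a + |s|) ∪ Ioc (b - |s|) b) := by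
      intro s hs v hv
      by_cases h1 : v ∈ Ioc (a - s) (b - s)
      · exact Or.inl h1
      · right
        rcases hv with ⟨hva, hvb⟩
        simp only [mem_Ioc, not_and_or, not_lt, not_le] at h1
        rcases h1 with h | h
        · left
          exact ⟨hva, by have := neg_abs_le s; linarith⟩
        · right
          exact ⟨by have := le_abs_self s; linarith, hvb⟩
    have hkey : ∀ p ∈ S, J ≤ (∫⁻ u in Ioc (a - p.1) (b - p.1), g u) + (c + c) := by
      intro p hp
      have hps : |p.1| ≤ N := abs_le.mpr ⟨hp.1.1, hp.1.2⟩
      calc J ≤ ∫⁻ v in Ioc (a - p.1) (b - p.1) ∪ (Ioc a (a + |p.1|) ∪ Ioc (b - |p.1|) b), g v :=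
            lintegral_mono_set (hsubset _ hps)
        _ ≤ (∫⁻ v in Ioc (a - p.1) (b - p.1), g v)
            + ∫⁻ v in Ioc a (a + |p.1|) ∪ Ioc (b - |p.1|) b, g v := lintegral_union_le _ _ _
        _ ≤ (∫⁻ v in Ioc (a - p.1) (b - p.1), g v)
            + ((∫⁻ v in Ioc a (a + |p.1|), g v) + ∫⁻ v in Ioc (b - |p.1|) b, g v) :=
            add_le_add_right (lintegral_union_le _ _ _) _
        _ ≤ (∫⁻ u in Ioc (a - p.1) (b - p.1), g u) + (c + c) := by
            refine add_le_add_right (add_le_add ?_ ?_) _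
            · refine le_trans (hsmall _ _) ?_
              rw [hcdef, show a + |p.1| - a = |p.1| by ring]
              exact mul_le_mul_right (ENNReal.ofReal_le_ofReal hps) _
            · refine le_trans (hsmall _ _) ?_
              rw [hcdef, show b - (b - |p.1|) = |p.1| by ring]
              exact mul_le_mul_right (ENNReal.ofReal_le_ofReal hps) _
    have step : ρ * J ≤ J + (c + c) * ρ := by
      calc ρ * J = ∫⁻ p in S, K p * J ∂ν := (lintegral_mul_const J hKmeas).symm
        _ ≤ ∫⁻ p in S, K p * ((∫⁻ u in Ioc (a - p.1) (b - p.1), g u) + (c + c)) ∂ν :=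
            setLIntegral_mono' hSmeas fun p hp => mul_le_mul_right (hkey p hp) _
        _ = (∫⁻ p in S, K p * (∫⁻ u in Ioc (a - p.1) (b - p.1), g u) ∂ν)
            + ∫⁻ p in S, K p * (c + c) ∂ν := by
            simp_rw [mul_add]
            exact lintegral_add_right _ ((hKmeas.mul_const _).add (hKmeas.mul_const _))
        _ ≤ J + (c + c) * ρ := by
            refine add_le_add ?_ ?_
            · refine le_trans (setLIntegral_le_lintegral _ _) ?_
              exact le_of_eq (L2 a b).symm
            · rw [lintegral_mul_const _ hKmeas]
              exact le_of_eq (mul_comm _ _)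
    have h1 : (ρ - 1) * J + J ≤ (c + c) * ρ + J := by
      have : (ρ - 1) * J + 1 * J ≤ J + (c + c) * ρ := by
        rw [← add_mul, tsub_add_cancel_of_le hρgt.le]
        exact step
      rw [one_mul] at this
      calc (ρ - 1) * J + J ≤ J + (c + c) * ρ := this
        _ = (c + c) * ρ + J := add_comm _ _
    have h2 : (ρ - 1) * J ≤ (c + c) * ρ := (ENNReal.add_le_add_iff_right hJne).mp h1
    rw [hBdef, ENNReal.le_div_iff_mul_le (Or.inl hρsub0) (Or.inl hρsubfin)]
    rw [mul_comm]
    exact h2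
  -- g is globally integrable with ∫⁻ g ≤ B
  have hI : ∫⁻ v, g v ≤ B := by
    set f : ℕ → ℝ → ℝ≥0∞ := fun n v => (Ioc (-(n : ℝ)) n).indicator g v with hfdef
    have hfmeas : ∀ n, Measurable (f n) := fun n => hgmeas.indicator measurableSet_Ioc
    have hfmono : Monotone f := by
      intro m n hmn v
      refine Set.indicator_le_indicator_of_subset
        (Ioc_subset_Ioc (neg_le_neg (Nat.cast_le.2 hmn)) (Nat.cast_le.2 hmn))
        (fun _ => zero_le) v
    have hfsup : ∀ v, (⨆ n, f n v) = g v := by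
      intro v
      refine le_antisymm (iSup_le fun n => indicator_le_self _ _ v) ?_
      obtain ⟨n, hn⟩ : ∃ n : ℕ, |v| + 1 ≤ n := exists_nat_ge (|v| + 1)
      have hv : v ∈ Ioc (-(n : ℝ)) n :=
        ⟨by have := neg_abs_le v; linarith, by have := le_abs_self v; linarith⟩
      refine le_iSup_of_le n ?_
      rw [hfdef]
      simp only [indicator_of_mem hv]
      exact le_refl _
    calc ∫⁻ v, g v = ∫⁻ v, ⨆ n, f n v := lintegral_congr fun v => (hfsup v).symm
      _ = ⨆ n, ∫⁻ v, f n v := lintegral_iSup hfmeas hfmono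
      _ ≤ B := by
          refine iSup_le fun n => ?_
          rw [hfdef]
          rw [lintegral_indicator measurableSet_Ioc]
          exact hB _ _
  have hIfin : (∫⁻ v, g v) ≠ ⊤ := (lt_of_le_of_lt hI hBfin).ne
  -- global equation: ∫⁻ g = κ * ∫⁻ g
  have hglob : ∫⁻ v, g v = (∫⁻ p, K p ∂ν) * ∫⁻ v, g v := by
    calc ∫⁻ v, g v = ∫⁻ v, ∫⁻ p, K p * g (v - p.1) ∂ν := lintegral_congr fun v => L1 v
      _ = ∫⁻ p, (∫⁻ v, K p * g (v - p.1)) ∂ν := lintegral_lintegral_swap hprodmeas.aemeasurable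
      _ = ∫⁻ p, K p * (∫⁻ v, g (v - p.1)) ∂ν :=
          lintegral_congr fun p => lintegral_const_mul _ (hgsubmeas p.1)
      _ = ∫⁻ p, K p * (∫⁻ v, g v) ∂ν := by
          refine lintegral_congr fun p => ?_
          congr 1
          exact (measurePreserving_sub_right volume p.1).lintegral_comp hgmeas
      _ = (∫⁻ p, K p ∂ν) * ∫⁻ v, g v := lintegral_mul_const _ hKmeas
  have hκgt : 1 < ∫⁻ p, K p ∂ν := lt_of_lt_of_le hρgt (setLIntegral_le_lintegral _ _)
  have hI0 : ∫⁻ v, g v = 0 := by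
    by_contra h0
    have hlt : 1 * (∫⁻ v, g v) < (∫⁻ p, K p ∂ν) * ∫⁻ v, g v :=
      ENNReal.mul_lt_mul_left h0 hIfin hκgt
    rw [one_mul, ← hglob] at hlt
    exact lt_irrefl _ hlt
  have hg0 : ∀ᵐ v ∂(volume : Measure ℝ), g v = 0 := (lintegral_eq_zero_iff hgmeas).mp hI0
  have hy0ae : y =ᵐ[(volume : Measure ℝ)] fun _ => 0 := by
    filter_upwards [hg0] with v hv
    have : y v ≤ 0 := by
      have := ENNReal.ofReal_eq_zero.mp hv
      exact this
    exact le_antisymm this (hynn v)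
  have hyz : y = fun _ => 0 := (Continuous.ae_eq_iff_eq volume hyc continuous_const).mp hy0ae
  intro t
  rw [hyz]

theorem stmt9
    {X : Type*} [MeasurableSpace X] (μ : Measure X) [IsFiniteMeasure μ]
    (k : ℝ → X → ℝ)
    (hkmeas : Measurable fun p : ℝ × X => k p.1 p.2)
    (hknn : ∀ s τ, 0 ≤ k s τ)
    (hkint : Integrable (fun p : ℝ × X => k p.1 p.2) ((volume : Measure ℝ).prod μ))
    (N : ℝ) (hN : 0 < N)
    (hρ : 1 < ∫ τ, (∫ s in Icc (-N) N, k s τ) ∂μ)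
    (y : ℝ → ℝ) (hyc : Continuous y) (hynn : ∀ t, 0 ≤ y t)
    (hybd : ∃ M, ∀ t, y t ≤ M)
    (hyeq : ∀ t, y t = ∫ τ, (∫ s, k s τ * y (t - s)) ∂μ)
    :
    (∀ t' t : ℝ, t' < t → (∫ v in t'..t, y v) ≤
      2 * (∫ τ, (∫ s in Icc (-N) N, |s| * k s τ) ∂μ) /
        ((∫ τ, (∫ s in Icc (-N) N, k s τ) ∂μ) - 1)) ∧
    Integrable y := by
  have hy0 : ∀ t, y t = 0 :=
    stmt9_aux_zero μ k hkmeas hknn hkint N hN hρ y hyc hynn hybd hyeq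
  constructor
  · intro t' t _
    have hz : (∫ v in t'..t, y v) = 0 := by
      simp only [hy0]
      simp
    rw [hz]
    apply div_nonneg
    · refine mul_nonneg (by norm_num) ?_
      refine integral_nonneg fun τ => ?_
      exact integral_nonneg fun s => mul_nonneg (abs_nonneg _) (hknn _ _)
    · linarith
  · have hyz : y = fun _ => 0 := funext hy0
    rw [hyz]
    exact integrable_zero _ _ _
end

section
/- Let p > q > 0, h ≥ 0, and let K : ℝ → [0,∞) be measurable with ∫_ℝ K(s) ds = 1. Define ψ(z,c) := z² − cz − q + p e^{−zch} ∫_ℝ K(s) e^{−zs} ds, and assume ∫_ℝ K(s) e^{−zs} ds is finite exactly for z in a maximal open interval (a,b) containing 0. Then there exist real numbers c⁻* < c⁺* such that: for every c ∈ (−∞, c⁻*] ∪ [c⁺*, +∞) the equation ψ(λ,c) = 0 has either exactly two real roots λ₁(c) ≤ λ₂(c) in (a,b) or exactly one real root λ₁(c) in (a,b); each such root is positive if c ≥ c⁺* and negative if c ≤ c⁻*; and if c ∈ (c⁻*, c⁺*) then ψ(z,c) > 0 for all z ∈ (a,b). -/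
open MeasureTheory Filter Topology Set

namespace Stmt17

noncomputable def Lap (K : ℝ → ℝ) (z : ℝ) : ℝ := ∫ s, K s * Real.exp (-(z * s))

def dom (a b : EReal) : Set ℝ := {z : ℝ | a < (z : EReal) ∧ (z : EReal) < b}

noncomputable def psi (p q h : ℝ) (K : ℝ → ℝ) (z c : ℝ) : ℝ :=
  z ^ 2 - c * z - q + p * Real.exp (-(z * c * h)) * Lap K z

variable {p q h : ℝ} {K : ℝ → ℝ} {a b : EReal}

theorem dom_open : IsOpen (dom a b) := by
  have e : dom a b = (fun z : ℝ => (z : EReal)) ⁻¹' (Ioi a ∩ Iio b) := rfl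
  rw [e]
  exact (isOpen_Ioi.inter isOpen_Iio).preimage continuous_coe_real_ereal

theorem dom_ordConn : OrdConnected (dom a b) := by
  constructor
  intro x hx y hy z hz
  exact ⟨lt_of_lt_of_le hx.1 (EReal.coe_le_coe_iff.2 hz.1),
    lt_of_le_of_lt (EReal.coe_le_coe_iff.2 hz.2) hy.2⟩

theorem dom_convex : Convex ℝ (dom a b) := dom_ordConn.convex

theorem aesm (hKm : Measurable K) (z : ℝ) :
    AEStronglyMeasurable (fun s => K s * Real.exp (-(z * s))) volume :=
  (hKm.mul (((measurable_id.const_mul z).neg).exp)).aestronglyMeasurable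

theorem lap_nonneg (hKnn : ∀ s, 0 ≤ K s) (z : ℝ) : 0 ≤ Lap K z :=
  integral_nonneg fun s => mul_nonneg (hKnn s) (Real.exp_nonneg _)

theorem lap_zero (hKnorm : (∫ s, K s) = 1) : Lap K 0 = 1 := by
  unfold Lap
  simp only [zero_mul, neg_zero, Real.exp_zero, mul_one]
  exact hKnorm

theorem psi_zero (hKnorm : (∫ s, K s) = 1) (c : ℝ) : psi p q h K 0 c = p - q := by
  unfold psi
  rw [lap_zero hKnorm]
  simp only [zero_mul, neg_zero, Real.exp_zero]
  ring

theorem integrable_shift {z : ℝ} (hint : Integrable (fun s => K s * Real.exp (-(z * s))))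
    (r : ℝ) : Integrable (fun s => K s * Real.exp (-(z * (s + r)))) := by
  have e : (fun s => K s * Real.exp (-(z * (s + r))))
      = fun s => Real.exp (-(z * r)) * (K s * Real.exp (-(z * s))) := by
    funext s
    rw [show -(z * (s + r)) = -(z * s) + -(z * r) by ring, Real.exp_add]
    ring
  rw [e]
  exact hint.const_mul _

theorem exp_mul_lap (z r : ℝ) :
    Real.exp (-(z * r)) * Lap K z = ∫ s, K s * Real.exp (-(z * (s + r))) := by
  unfold Lap
  rw [← integral_const_mul]
  congr 1
  funext s
  rw [show -(z * (s + r)) = -(z * s) + -(z * r) by ring, Real.exp_add]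
  ring


theorem lap_continuousAt (hKm : Measurable K) (hKnn : ∀ s, 0 ≤ K s)
    (hdom : ∀ z : ℝ, Integrable (fun s => K s * Real.exp (-(z * s))) ↔ z ∈ dom a b)
    {z₀ : ℝ} (hz : z₀ ∈ dom a b) : ContinuousAt (Lap K) z₀ := by
  obtain ⟨ε, hε, hball⟩ := Metric.isOpen_iff.1 dom_open z₀ hz
  have hu : z₀ - ε / 2 ∈ dom a b := by
    apply hball
    rw [Metric.mem_ball, Real.dist_eq]
    rw [show z₀ - ε / 2 - z₀ = -(ε / 2) by ring, abs_neg, abs_of_pos (by linarith)]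
    linarith
  have hv : z₀ + ε / 2 ∈ dom a b := by
    apply hball
    rw [Metric.mem_ball, Real.dist_eq]
    rw [show z₀ + ε / 2 - z₀ = ε / 2 by ring, abs_of_pos (by linarith)]
    linarith
  set u := z₀ - ε / 2
  set v := z₀ + ε / 2
  apply continuousAt_of_dominated (bound := fun s => K s * Real.exp (-(u * s)) + K s * Real.exp (-(v * s)))
  · exact Eventually.of_forall fun z => aesm hKm z
  · have hmem : Icc u v ∈ 𝓝 z₀ := Icc_mem_nhds (by simp [u]; linarith) (by simp [v]; linarith)
    filter_upwards [hmem] with z hz'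
    refine Eventually.of_forall fun s => ?_
    rw [Real.norm_eq_abs, abs_of_nonneg (mul_nonneg (hKnn s) (Real.exp_nonneg _))]
    rcases le_total 0 s with hs | hs
    · have : Real.exp (-(z * s)) ≤ Real.exp (-(u * s)) :=
        Real.exp_le_exp.2 (by nlinarith [hz'.1])
      nlinarith [mul_nonneg (hKnn s) (Real.exp_nonneg (-(v * s))), hKnn s]
    · have : Real.exp (-(z * s)) ≤ Real.exp (-(v * s)) :=
        Real.exp_le_exp.2 (by nlinarith [hz'.2])
      nlinarith [mul_nonneg (hKnn s) (Real.exp_nonneg (-(u * s))), hKnn s]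
  · exact ((hdom u).2 hu).add ((hdom v).2 hv)
  · refine Eventually.of_forall fun s => ?_
    exact (continuous_const.mul (Real.continuous_exp.comp
      ((continuous_id.mul continuous_const).neg))).continuousAt

theorem psi_contAt (hKm : Measurable K) (hKnn : ∀ s, 0 ≤ K s)
    (hdom : ∀ z : ℝ, Integrable (fun s => K s * Real.exp (-(z * s))) ↔ z ∈ dom a b)
    {z₀ : ℝ} (hz : z₀ ∈ dom a b) (c₀ : ℝ) :
    ContinuousAt (fun zc : ℝ × ℝ => psi p q h K zc.1 zc.2) (z₀, c₀) := by
  have hL : ContinuousAt (fun zc : ℝ × ℝ => Lap K zc.1) (z₀, c₀) :=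
    ContinuousAt.comp (g := Lap K) (f := Prod.fst) (x := (z₀, c₀)) (lap_continuousAt hKm hKnn hdom hz) continuousAt_fst
  unfold psi
  exact (((continuousAt_fst.pow 2).sub (continuousAt_snd.mul continuousAt_fst)).sub
      continuousAt_const).add
    ((continuousAt_const.mul
      (((continuousAt_fst.mul continuousAt_snd).mul continuousAt_const).neg.rexp)).mul hL)

theorem psi_contAt1 (hKm : Measurable K) (hKnn : ∀ s, 0 ≤ K s)
    (hdom : ∀ z : ℝ, Integrable (fun s => K s * Real.exp (-(z * s))) ↔ z ∈ dom a b)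
    {z₀ : ℝ} (hz : z₀ ∈ dom a b) (c : ℝ) :
    ContinuousAt (fun z => psi p q h K z c) z₀ := by
  have hpm : ContinuousAt (fun z : ℝ => ((z, c) : ℝ × ℝ)) z₀ :=
    continuousAt_id.prodMk continuousAt_const
  have hc := Filter.Tendsto.comp (psi_contAt (p := p) (q := q) (h := h) hKm hKnn hdom hz c) hpm
  exact hc

theorem convexOn_expLap (hKnn : ∀ s, 0 ≤ K s)
    (hdom : ∀ z : ℝ, Integrable (fun s => K s * Real.exp (-(z * s))) ↔ z ∈ dom a b)
    (r : ℝ) : ConvexOn ℝ (dom a b) (fun z => Real.exp (-(z * r)) * Lap K z) := by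
  refine ⟨dom_convex, ?_⟩
  intro x hx y hy t u ht hu htu
  have hm : t • x + u • y ∈ dom a b := dom_convex hx hy ht hu htu
  have hxi := integrable_shift ((hdom x).2 hx) r
  have hyi := integrable_shift ((hdom y).2 hy) r
  have hmi := integrable_shift ((hdom _).2 hm) r
  simp only [smul_eq_mul]
  rw [exp_mul_lap, exp_mul_lap, exp_mul_lap, ← integral_const_mul t, ← integral_const_mul u,
    ← integral_add (hxi.const_mul t) (hyi.const_mul u)]
  refine integral_mono hmi ((hxi.const_mul t).add (hyi.const_mul u)) fun s => ?_
  have hcv := convexOn_exp.2 (mem_univ (-(x * (s + r)))) (mem_univ (-(y * (s + r)))) ht hu htu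
  simp only [smul_eq_mul] at hcv
  have harg : -((t * x + u * y) * (s + r)) = t * -(x * (s + r)) + u * -(y * (s + r)) := by ring
  simp only [harg]
  calc K s * Real.exp (t * -(x * (s + r)) + u * -(y * (s + r)))
      ≤ K s * (t * Real.exp (-(x * (s + r))) + u * Real.exp (-(y * (s + r)))) :=
        mul_le_mul_of_nonneg_left hcv (hKnn s)
    _ = t * (K s * Real.exp (-(x * (s + r)))) + u * (K s * Real.exp (-(y * (s + r)))) := by ring


theorem psi_strictConvexOn (hp : 0 < p) (hKnn : ∀ s, 0 ≤ K s)
    (hdom : ∀ z : ℝ, Integrable (fun s => K s * Real.exp (-(z * s))) ↔ z ∈ dom a b)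
    (c : ℝ) : StrictConvexOn ℝ (dom a b) (fun z => psi p q h K z c) := by
  refine ⟨dom_convex, ?_⟩
  intro x hx y hy hxy t u ht hu htu
  have hcv := (convexOn_expLap hKnn hdom (c * h)).2 hx hy ht.le hu.le htu
  simp only [smul_eq_mul] at hcv ⊢
  have hcv' := mul_le_mul_of_nonneg_left hcv hp.le
  unfold psi
  have e1 : ∀ w : ℝ, w * c * h = w * (c * h) := fun w => by ring
  rw [e1, e1, e1]
  have hxy2 : 0 < (x - y) ^ 2 :=
    lt_of_le_of_ne (sq_nonneg _) (Ne.symm (pow_ne_zero 2 (sub_ne_zero.2 hxy)))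
  have hu' : u = 1 - t := by linarith
  subst hu'
  have hquad : (t * x + (1 - t) * y) ^ 2 - c * (t * x + (1 - t) * y) - q <
      t * (x ^ 2 - c * x - q) + (1 - t) * (y ^ 2 - c * y - q) := by
    nlinarith [mul_pos (mul_pos ht hu) hxy2]
  nlinarith [hquad, hcv']

theorem psi_convexOn (hp : 0 < p) (hKnn : ∀ s, 0 ≤ K s)
    (hdom : ∀ z : ℝ, Integrable (fun s => K s * Real.exp (-(z * s))) ↔ z ∈ dom a b)
    (c : ℝ) : ConvexOn ℝ (dom a b) (fun z => psi p q h K z c) :=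
  (psi_strictConvexOn hp hKnn hdom c).convexOn

theorem psi_anti (hp : 0 < p) (hh : 0 ≤ h) (hKnn : ∀ s, 0 ≤ K s)
    {z c c' : ℝ} (hz : 0 < z) (hcc : c ≤ c') : psi p q h K z c' ≤ psi p q h K z c := by
  unfold psi
  have h1 : c * z ≤ c' * z := mul_le_mul_of_nonneg_right hcc hz.le
  have h2 : Real.exp (-(z * c' * h)) ≤ Real.exp (-(z * c * h)) :=
    Real.exp_le_exp.2 (by nlinarith)
  have h3 := mul_le_mul_of_nonneg_left
    (mul_le_mul_of_nonneg_right h2 (lap_nonneg hKnn z)) hp.le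
  linarith
theorem psi_mono (hp : 0 < p) (hh : 0 ≤ h) (hKnn : ∀ s, 0 ≤ K s)
    {z c c' : ℝ} (hz : z < 0) (hcc : c ≤ c') : psi p q h K z c ≤ psi p q h K z c' := by
  unfold psi
  have h1 : c' * z ≤ c * z := mul_le_mul_of_nonpos_right hcc hz.le
  have h2 : Real.exp (-(z * c * h)) ≤ Real.exp (-(z * c' * h)) :=
    Real.exp_le_exp.2 (by nlinarith)
  have h3 := mul_le_mul_of_nonneg_left
    (mul_le_mul_of_nonneg_right h2 (lap_nonneg hKnn z)) hp.le
  linarith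

theorem no_three_roots {f : ℝ → ℝ} (hsc : StrictConvexOn ℝ (dom a b) f)
    {z1 z2 z3 : ℝ} (h1 : z1 ∈ dom a b) (h3 : z3 ∈ dom a b)
    (h12 : z1 < z2) (h23 : z2 < z3) (e1 : f z1 = 0) (e2 : f z2 = 0) (e3 : f z3 = 0) :
    False := by
  set d := z3 - z1 with hd
  have hdpos : 0 < d := by simp only [hd]; linarith
  have ht : 0 < (z3 - z2) / d := div_pos (by linarith) hdpos
  have hu : 0 < (z2 - z1) / d := div_pos (by linarith) hdpos
  have htu : (z3 - z2) / d + (z2 - z1) / d = 1 := by field_simp [hd]; linarith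
  have key := hsc.2 h1 h3 (ne_of_lt (h12.trans h23)) ht hu htu
  simp only [smul_eq_mul] at key
  have e : (z3 - z2) / d * z1 + (z2 - z1) / d * z3 = z2 := by field_simp [hd]; ring
  rw [e, e1, e2, e3] at key
  simp at key

theorem between_nonpos {f : ℝ → ℝ} (hcv : ConvexOn ℝ (dom a b) f)
    {z1 z2 w : ℝ} (h1 : z1 ∈ dom a b) (h2 : z2 ∈ dom a b)
    (hw1 : z1 < w) (hw2 : w < z2) (e1 : f z1 ≤ 0) (e2 : f z2 ≤ 0) : f w ≤ 0 := by
  set d := z2 - z1 with hd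
  have hdpos : 0 < d := by simp only [hd]; linarith
  have ht : 0 ≤ (z2 - w) / d := le_of_lt (div_pos (by linarith) hdpos)
  have hu : 0 ≤ (w - z1) / d := le_of_lt (div_pos (by linarith) hdpos)
  have htu : (z2 - w) / d + (w - z1) / d = 1 := by field_simp [hd]; linarith
  have key := hcv.2 h1 h2 ht hu htu
  simp only [smul_eq_mul] at key
  have e : (z2 - w) / d * z1 + (w - z1) / d * z2 = w := by field_simp [hd]; ring
  rw [e] at key
  have l1 : (z2 - w) / d * f z1 ≤ 0 := mul_nonpos_of_nonneg_of_nonpos ht e1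
  have l2 : (w - z1) / d * f z2 ≤ 0 := mul_nonpos_of_nonneg_of_nonpos hu e2
  linarith

theorem fatou_mem_dom (hKm : Measurable K) (hKnn : ∀ s, 0 ≤ K s)
    (hdom : ∀ z : ℝ, Integrable (fun s => K s * Real.exp (-(z * s))) ↔ z ∈ dom a b)
    {zs : ℕ → ℝ} {zstar R : ℝ} (hzd : ∀ n, zs n ∈ dom a b)
    (hlim : Tendsto zs atTop (𝓝 zstar)) (hR : ∀ n, Lap K (zs n) ≤ R) :
    zstar ∈ dom a b := by
  apply (hdom zstar).1
  refine ⟨(hKm.mul (((measurable_id.const_mul zstar).neg).exp)).aestronglyMeasurable, ?_⟩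
  rw [hasFiniteIntegral_iff_ofReal (Eventually.of_forall fun s =>
    mul_nonneg (hKnn s) (Real.exp_nonneg _))]
  have hmeas : ∀ n, Measurable fun s => ENNReal.ofReal (K s * Real.exp (-(zs n * s))) :=
    fun n => (hKm.mul (((measurable_id.const_mul (zs n)).neg).exp)).ennreal_ofReal
  have hpt : ∀ s : ℝ, Tendsto (fun n => ENNReal.ofReal (K s * Real.exp (-(zs n * s)))) atTop
      (𝓝 (ENNReal.ofReal (K s * Real.exp (-(zstar * s))))) := by
    intro s
    have hc : Continuous fun w : ℝ => ENNReal.ofReal (K s * Real.exp (-(w * s))) :=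
      ENNReal.continuous_ofReal.comp
        (continuous_const.mul (Real.continuous_exp.comp ((continuous_id.mul continuous_const).neg)))
    exact (hc.tendsto zstar).comp hlim
  have hbound : ∀ n, (∫⁻ s, ENNReal.ofReal (K s * Real.exp (-(zs n * s)))) ≤ ENNReal.ofReal R := by
    intro n
    rw [← ofReal_integral_eq_lintegral_ofReal ((hdom (zs n)).2 (hzd n))
      (Eventually.of_forall fun s => mul_nonneg (hKnn s) (Real.exp_nonneg _))]
    exact ENNReal.ofReal_le_ofReal (hR n)
  calc (∫⁻ s, ENNReal.ofReal (K s * Real.exp (-(zstar * s))))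
      = ∫⁻ s, liminf (fun n => ENNReal.ofReal (K s * Real.exp (-(zs n * s)))) atTop := by
        congr 1; funext s; exact ((hpt s).liminf_eq).symm
    _ ≤ liminf (fun n => ∫⁻ s, ENNReal.ofReal (K s * Real.exp (-(zs n * s)))) atTop :=
        lintegral_liminf_le hmeas
    _ ≤ ENNReal.ofReal R := liminf_le_of_le (by isBoundedDefault)
        (fun b hb => by
          obtain ⟨n, hn⟩ := hb.exists
          exact hn.trans (hbound n))
    _ < ⊤ := ENNReal.ofReal_lt_top


def SetA (p q h : ℝ) (K : ℝ → ℝ) (a b : EReal) : Set ℝ :=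
  {c | ∃ z, z ∈ dom a b ∧ 0 < z ∧ psi p q h K z c ≤ 0}
def SetB (p q h : ℝ) (K : ℝ → ℝ) (a b : EReal) : Set ℝ :=
  {c | ∃ z, z ∈ dom a b ∧ z < 0 ∧ psi p q h K z c ≤ 0}
variable {p q h : ℝ} {K : ℝ → ℝ} {a b : EReal}

theorem setA_up (hp0 : 0 < p) (hh : 0 ≤ h) (hKnn : ∀ s, 0 ≤ K s)
    {c c' : ℝ} (hc : c ∈ SetA p q h K a b) (hcc : c ≤ c') : c' ∈ SetA p q h K a b := by
  obtain ⟨z, hzd, hz0, hzle⟩ := hc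
  exact ⟨z, hzd, hz0, (psi_anti hp0 hh hKnn hz0 hcc).trans hzle⟩

theorem setB_down (hp0 : 0 < p) (hh : 0 ≤ h) (hKnn : ∀ s, 0 ≤ K s)
    {c c' : ℝ} (hc : c' ∈ SetB p q h K a b) (hcc : c ≤ c') : c ∈ SetB p q h K a b := by
  obtain ⟨z, hzd, hz0, hzle⟩ := hc
  exact ⟨z, hzd, hz0, (psi_mono hp0 hh hKnn hz0 hcc).trans hzle⟩

theorem sInf_SetA_mem (hq : 0 < q) (hpq : q < p) (hh : 0 ≤ h)
    (hKm : Measurable K) (hKnn : ∀ s, 0 ≤ K s) (hKnorm : (∫ s, K s) = 1)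
    (hdom : ∀ z : ℝ, Integrable (fun s => K s * Real.exp (-(z * s))) ↔ z ∈ dom a b)
    (hAne : (SetA p q h K a b).Nonempty) :
    sInf (SetA p q h K a b) ∈ SetA p q h K a b := by
  have hp0 : 0 < p := hq.trans hpq
  set cp := sInf (SetA p q h K a b) with hcpdef
  set cs : ℕ → ℝ := fun n => cp + 1 / ((n : ℝ) + 1) with hcsdef
  have hcn : ∀ n : ℕ, ∃ z, z ∈ dom a b ∧ 0 < z ∧ psi p q h K z (cs n) ≤ 0 := by
    intro n
    obtain ⟨c', hc', hlt⟩ := Real.lt_sInf_add_pos hAne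
      (show (0:ℝ) < 1 / ((n : ℝ) + 1) by positivity)
    exact setA_up hp0 hh hKnn hc' hlt.le
  choose zs hzsd hzspos hzsle using hcn
  have hclim : Tendsto cs atTop (𝓝 cp) := by
    have h1 := tendsto_one_div_add_atTop_nhds_zero_nat (𝕜 := ℝ)
    have h2 : Tendsto (fun _ : ℕ => cp) atTop (𝓝 cp) := tendsto_const_nhds
    rw [hcsdef]
    simpa [one_div] using h2.add h1
  set C := |cp| + 1 with hCdef
  have hC1 : 1 ≤ C := by have := abs_nonneg cp; simp only [hCdef]; linarith
  have hcsb : ∀ n, |cs n| ≤ C := by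
    intro n
    have h1 : (0:ℝ) < 1 / ((n : ℝ) + 1) := by positivity
    have h2 : 1 / ((n : ℝ) + 1) ≤ 1 := by
      rw [div_le_one (by positivity)]
      have := Nat.cast_nonneg (α := ℝ) n
      linarith
    calc |cs n| ≤ |cp| + |1 / ((n : ℝ) + 1)| := abs_add_le _ _
      _ ≤ C := by rw [abs_of_pos h1]; simp only [hCdef]; linarith
  set M := C + q + 1 with hMdef
  have hM0 : 0 < M := by simp only [hMdef]; linarith
  have hterm : ∀ n, 0 ≤ p * Real.exp (-(zs n * cs n * h)) * Lap K (zs n) := fun n =>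
    mul_nonneg (mul_nonneg hp0.le (Real.exp_nonneg _)) (lap_nonneg hKnn _)
  have hq2 : ∀ n, (zs n) ^ 2 - cs n * zs n - q ≤ 0 := by
    intro n
    have hle := hzsle n
    unfold psi at hle
    linarith [hterm n]
  have hzsM : ∀ n, zs n ≤ M := by
    intro n
    have hcz : cs n * zs n ≤ C * zs n :=
      mul_le_mul_of_nonneg_right ((le_abs_self _).trans (hcsb n)) (hzspos n).le
    by_contra hM
    push_neg at hM
    have hp1 : (0:ℝ) < zs n - C - q := by simp only [hMdef] at hM; linarith
    have hp2 : (0:ℝ) < zs n - 1 := by simp only [hMdef] at hM; linarith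
    nlinarith [hq2 n, hcz, mul_pos (hzspos n) hp1, mul_pos hq hp2]
  have habs : ∀ n, |zs n| ≤ M := fun n => by
    rw [abs_of_pos (hzspos n)]; exact hzsM n
  have hzc : ∀ n, zs n * cs n ≤ C * M := by
    intro n
    calc zs n * cs n ≤ |zs n * cs n| := le_abs_self _
      _ = |zs n| * |cs n| := abs_mul _ _
      _ ≤ M * C := mul_le_mul (habs n) (hcsb n) (abs_nonneg _) hM0.le
      _ = C * M := mul_comm _ _
  set m0 := Real.exp (-(C * M * h)) with hm0def
  have hm0pos : 0 < p * m0 := mul_pos hp0 (Real.exp_pos _)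
  set R := (C * M + q) / (p * m0) with hRdef
  have hLb : ∀ n, Lap K (zs n) ≤ R := by
    intro n
    have hle := hzsle n
    unfold psi at hle
    have h1 : p * Real.exp (-(zs n * cs n * h)) * Lap K (zs n) ≤ C * M + q := by
      have hcz : cs n * zs n ≤ C * M := by
        calc cs n * zs n ≤ |cs n * zs n| := le_abs_self _
          _ = |cs n| * |zs n| := abs_mul _ _
          _ ≤ C * M := mul_le_mul (hcsb n) (habs n) (abs_nonneg _) (by linarith)
      nlinarith [sq_nonneg (zs n)]
    have h2 : m0 ≤ Real.exp (-(zs n * cs n * h)) := by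
      rw [hm0def]
      apply Real.exp_le_exp.2
      have := mul_le_mul_of_nonneg_right (hzc n) hh
      linarith
    have h3 : p * m0 * Lap K (zs n) ≤ p * Real.exp (-(zs n * cs n * h)) * Lap K (zs n) :=
      mul_le_mul_of_nonneg_right (mul_le_mul_of_nonneg_left h2 hp0.le) (lap_nonneg hKnn _)
    rw [hRdef, le_div_iff₀ hm0pos]
    nlinarith
  obtain ⟨zstar, hzstmem, φ, hφ, hzlim⟩ :=
    (isCompact_Icc (a := (0:ℝ)) (b := M)).tendsto_subseq
      (x := zs) (fun n => ⟨(hzspos n).le, hzsM n⟩)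
  have hzstd : zstar ∈ dom a b :=
    fatou_mem_dom hKm hKnn hdom (zs := zs ∘ φ) (fun n => hzsd (φ n)) hzlim (fun n => hLb (φ n))
  have hcφ : Tendsto (fun n => cs (φ n)) atTop (𝓝 cp) := hclim.comp hφ.tendsto_atTop
  have hψlim : Tendsto (fun n => psi p q h K (zs (φ n)) (cs (φ n))) atTop
      (𝓝 (psi p q h K zstar cp)) := by
    have hpair : Tendsto (fun n => (zs (φ n), cs (φ n))) atTop (𝓝 (zstar, cp)) :=
      Tendsto.prodMk_nhds hzlim hcφ
    have := (psi_contAt (p := p) (q := q) (h := h) hKm hKnn hdom hzstd cp).tendsto.comp hpair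
    exact this
  have hψst : psi p q h K zstar cp ≤ 0 :=
    le_of_tendsto hψlim (Eventually.of_forall fun n => hzsle (φ n))
  have hzstpos : 0 < zstar := by
    rcases eq_or_lt_of_le hzstmem.1 with heq | hlt
    · exfalso
      rw [← heq, psi_zero hKnorm] at hψst
      linarith
    · exact hlt
  exact ⟨zstar, hzstd, hzstpos, hψst⟩

theorem sSup_SetB_mem (hq : 0 < q) (hpq : q < p) (hh : 0 ≤ h)
    (hKm : Measurable K) (hKnn : ∀ s, 0 ≤ K s) (hKnorm : (∫ s, K s) = 1)
    (hdom : ∀ z : ℝ, Integrable (fun s => K s * Real.exp (-(z * s))) ↔ z ∈ dom a b)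
    (hBne : (SetB p q h K a b).Nonempty) :
    sSup (SetB p q h K a b) ∈ SetB p q h K a b := by
  have hp0 : 0 < p := hq.trans hpq
  set cm := sSup (SetB p q h K a b) with hcmdef
  set cs : ℕ → ℝ := fun n => cm + -(1 / ((n : ℝ) + 1)) with hcsdef
  have hcn : ∀ n : ℕ, ∃ z, z ∈ dom a b ∧ z < 0 ∧ psi p q h K z (cs n) ≤ 0 := by
    intro n
    obtain ⟨c', hc', hlt⟩ := Real.add_neg_lt_sSup hBne
      (show -(1 / ((n : ℝ) + 1)) < (0:ℝ) by
        have : (0:ℝ) < 1 / ((n : ℝ) + 1) := by positivity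
        linarith)
    exact setB_down hp0 hh hKnn hc' hlt.le
  choose zs hzsd hzsneg hzsle using hcn
  have hclim : Tendsto cs atTop (𝓝 cm) := by
    have h1 := tendsto_one_div_add_atTop_nhds_zero_nat (𝕜 := ℝ)
    have h2 : Tendsto (fun _ : ℕ => cm) atTop (𝓝 cm) := tendsto_const_nhds
    rw [hcsdef]
    simpa [one_div] using h2.add h1.neg
  set C := |cm| + 1 with hCdef
  have hC1 : 1 ≤ C := by have := abs_nonneg cm; simp only [hCdef]; linarith
  have hcsb : ∀ n, |cs n| ≤ C := by
    intro n
    have h1 : (0:ℝ) < 1 / ((n : ℝ) + 1) := by positivity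
    have h2 : 1 / ((n : ℝ) + 1) ≤ 1 := by
      rw [div_le_one (by positivity)]
      have := Nat.cast_nonneg (α := ℝ) n
      linarith
    calc |cs n| ≤ |cm| + |-(1 / ((n : ℝ) + 1))| := abs_add_le _ _
      _ ≤ C := by rw [abs_neg, abs_of_pos h1]; simp only [hCdef]; linarith
  set M := C + q + 1 with hMdef
  have hM0 : 0 < M := by simp only [hMdef]; linarith
  have hterm : ∀ n, 0 ≤ p * Real.exp (-(zs n * cs n * h)) * Lap K (zs n) := fun n =>
    mul_nonneg (mul_nonneg hp0.le (Real.exp_nonneg _)) (lap_nonneg hKnn _)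
  have hq2 : ∀ n, (zs n) ^ 2 - cs n * zs n - q ≤ 0 := by
    intro n
    have hle := hzsle n
    unfold psi at hle
    linarith [hterm n]
  have hzsM : ∀ n, -M ≤ zs n := by
    intro n
    have hcz : cs n * zs n ≤ C * (-(zs n)) := by
      calc cs n * zs n ≤ |cs n * zs n| := le_abs_self _
        _ = |cs n| * |zs n| := abs_mul _ _
        _ ≤ C * |zs n| := mul_le_mul_of_nonneg_right (hcsb n) (abs_nonneg _)
        _ = C * (-(zs n)) := by rw [abs_of_neg (hzsneg n)]
    by_contra hM
    push_neg at hM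
    have hp1 : (0:ℝ) < -(zs n) - C - q := by simp only [hMdef] at hM; linarith
    have hp2 : (0:ℝ) < -(zs n) - 1 := by simp only [hMdef] at hM; linarith
    nlinarith [hq2 n, hcz, mul_pos (neg_pos.2 (hzsneg n)) hp1, mul_pos hq hp2]
  have habs : ∀ n, |zs n| ≤ M := fun n => by
    rw [abs_of_neg (hzsneg n)]; linarith [hzsM n]
  have hzc : ∀ n, zs n * cs n ≤ C * M := by
    intro n
    calc zs n * cs n ≤ |zs n * cs n| := le_abs_self _
      _ = |zs n| * |cs n| := abs_mul _ _
      _ ≤ M * C := mul_le_mul (habs n) (hcsb n) (abs_nonneg _) hM0.le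
      _ = C * M := mul_comm _ _
  set m0 := Real.exp (-(C * M * h)) with hm0def
  have hm0pos : 0 < p * m0 := mul_pos hp0 (Real.exp_pos _)
  set R := (C * M + q) / (p * m0) with hRdef
  have hLb : ∀ n, Lap K (zs n) ≤ R := by
    intro n
    have hle := hzsle n
    unfold psi at hle
    have h1 : p * Real.exp (-(zs n * cs n * h)) * Lap K (zs n) ≤ C * M + q := by
      have hcz : cs n * zs n ≤ C * M := by
        calc cs n * zs n ≤ |cs n * zs n| := le_abs_self _
          _ = |cs n| * |zs n| := abs_mul _ _
          _ ≤ C * M := mul_le_mul (hcsb n) (habs n) (abs_nonneg _) (by linarith)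
      nlinarith [sq_nonneg (zs n)]
    have h2 : m0 ≤ Real.exp (-(zs n * cs n * h)) := by
      rw [hm0def]
      apply Real.exp_le_exp.2
      have := mul_le_mul_of_nonneg_right (hzc n) hh
      linarith
    have h3 : p * m0 * Lap K (zs n) ≤ p * Real.exp (-(zs n * cs n * h)) * Lap K (zs n) :=
      mul_le_mul_of_nonneg_right (mul_le_mul_of_nonneg_left h2 hp0.le) (lap_nonneg hKnn _)
    rw [hRdef, le_div_iff₀ hm0pos]
    nlinarith
  obtain ⟨zstar, hzstmem, φ, hφ, hzlim⟩ :=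
    (isCompact_Icc (a := -M) (b := (0:ℝ))).tendsto_subseq
      (x := zs) (fun n => ⟨hzsM n, (hzsneg n).le⟩)
  have hzstd : zstar ∈ dom a b :=
    fatou_mem_dom hKm hKnn hdom (zs := zs ∘ φ) (fun n => hzsd (φ n)) hzlim (fun n => hLb (φ n))
  have hcφ : Tendsto (fun n => cs (φ n)) atTop (𝓝 cm) := hclim.comp hφ.tendsto_atTop
  have hψlim : Tendsto (fun n => psi p q h K (zs (φ n)) (cs (φ n))) atTop
      (𝓝 (psi p q h K zstar cm)) := by
    have hpair : Tendsto (fun n => (zs (φ n), cs (φ n))) atTop (𝓝 (zstar, cm)) :=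
      Tendsto.prodMk_nhds hzlim hcφ
    have := (psi_contAt (p := p) (q := q) (h := h) hKm hKnn hdom hzstd cm).tendsto.comp hpair
    exact this
  have hψst : psi p q h K zstar cm ≤ 0 :=
    le_of_tendsto hψlim (Eventually.of_forall fun n => hzsle (φ n))
  have hzstneg : zstar < 0 := by
    rcases eq_or_lt_of_le hzstmem.2 with heq | hlt
    · exfalso
      rw [heq, psi_zero hKnorm] at hψst
      linarith
    · exact hlt
  exact ⟨zstar, hzstd, hzstneg, hψst⟩


end Stmt17

open Stmt17 in
theorem stmt17
    (p q h : ℝ) (hq : 0 < q) (hpq : q < p) (hh : 0 ≤ h)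
    (K : ℝ → ℝ) (hKm : Measurable K) (hKnn : ∀ s, 0 ≤ K s)
    (hKint : Integrable K) (hKnorm : (∫ s, K s) = 1)
    (a b : EReal) (ha : a < 0) (hb : 0 < b)
    (hdom : ∀ z : ℝ, (Integrable (fun s => K s * Real.exp (-(z * s)))) ↔ (a < (z:EReal) ∧ (z:EReal) < b)) :
    ∃ cm cp : ℝ, cm < cp ∧
      (∀ c : ℝ, (c ≤ cm ∨ cp ≤ c) →
        (∃ z : ℝ, (Integrable (fun s => K s * Real.exp (-(z * s)))) ∧ (fun z c : ℝ => z ^ 2 - c * z - q + p * Real.exp (-(z * c * h)) * ∫ s, K s * Real.exp (-(z * s))) z c = 0) ∧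
        (∃ z₁ z₂ : ℝ, ∀ z : ℝ, (Integrable (fun s => K s * Real.exp (-(z * s)))) → (fun z c : ℝ => z ^ 2 - c * z - q + p * Real.exp (-(z * c * h)) * ∫ s, K s * Real.exp (-(z * s))) z c = 0 → z = z₁ ∨ z = z₂) ∧
        (∀ z : ℝ, (Integrable (fun s => K s * Real.exp (-(z * s)))) → (fun z c : ℝ => z ^ 2 - c * z - q + p * Real.exp (-(z * c * h)) * ∫ s, K s * Real.exp (-(z * s))) z c = 0 →
          (cp ≤ c → 0 < z) ∧ (c ≤ cm → z < 0))) ∧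
      (∀ c : ℝ, cm < c → c < cp → ∀ z : ℝ, (Integrable (fun s => K s * Real.exp (-(z * s)))) → 0 < (fun z c : ℝ => z ^ 2 - c * z - q + p * Real.exp (-(z * c * h)) * ∫ s, K s * Real.exp (-(z * s))) z c) := by
  classical
  have hp0 : 0 < p := hq.trans hpq
  have hdomI : ∀ z : ℝ, Integrable (fun s => K s * Real.exp (-(z * s))) ↔ z ∈ Stmt17.dom a b :=
    fun z => hdom z
  have h0mem : (0:ℝ) ∈ Stmt17.dom a b := by
    constructor
    · exact_mod_cast ha
    · exact_mod_cast hb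
  -- SetA nonempty
  obtain ⟨z₀, hz₀0, hz₀b⟩ := EReal.exists_between_coe_real hb
  have hz₀pos : (0:ℝ) < z₀ := by exact_mod_cast hz₀0
  have hz₀mem : z₀ ∈ Stmt17.dom a b := ⟨ha.trans hz₀0, hz₀b⟩
  have hAne : (SetA p q h K a b).Nonempty := by
    refine ⟨max 0 ((z₀ ^ 2 + p * Lap K z₀) / z₀), z₀, hz₀mem, hz₀pos, ?_⟩
    set c := max (0:ℝ) ((z₀ ^ 2 + p * Lap K z₀) / z₀) with hcdef
    have hc0 : (0:ℝ) ≤ c := le_max_left _ _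
    have hcz : z₀ ^ 2 + p * Lap K z₀ ≤ c * z₀ := by
      have h1 : (z₀ ^ 2 + p * Lap K z₀) / z₀ ≤ c := le_max_right _ _
      have h2 := mul_le_mul_of_nonneg_right h1 hz₀pos.le
      rwa [div_mul_cancel₀ _ hz₀pos.ne'] at h2
    have hexp : Real.exp (-(z₀ * c * h)) ≤ 1 := Real.exp_le_one_iff.2
      (by nlinarith [mul_nonneg (mul_nonneg hz₀pos.le hc0) hh])
    have hLnn := lap_nonneg hKnn z₀
    have h2 := mul_le_mul_of_nonneg_right (mul_le_mul_of_nonneg_left hexp hp0.le) hLnn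
    unfold psi
    nlinarith [h2]
  -- SetB nonempty
  obtain ⟨z₁, hz₁a, hz₁0⟩ := EReal.exists_between_coe_real ha
  have hz₁neg : z₁ < (0:ℝ) := by exact_mod_cast hz₁0
  have hz₁mem : z₁ ∈ Stmt17.dom a b := ⟨hz₁a, hz₁0.trans hb⟩
  have hBne : (SetB p q h K a b).Nonempty := by
    refine ⟨min 0 ((z₁ ^ 2 + p * Lap K z₁) / z₁), z₁, hz₁mem, hz₁neg, ?_⟩
    set c := min (0:ℝ) ((z₁ ^ 2 + p * Lap K z₁) / z₁) with hcdef
    have hc0 : c ≤ (0:ℝ) := min_le_left _ _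
    have hcz : z₁ ^ 2 + p * Lap K z₁ ≤ c * z₁ := by
      have h1 : c ≤ (z₁ ^ 2 + p * Lap K z₁) / z₁ := min_le_right _ _
      have h2 := mul_le_mul_of_nonpos_right h1 hz₁neg.le
      rwa [div_mul_cancel₀ _ hz₁neg.ne] at h2
    have hexp : Real.exp (-(z₁ * c * h)) ≤ 1 := Real.exp_le_one_iff.2
      (by nlinarith [mul_nonneg (mul_nonneg (neg_nonneg.2 hz₁neg.le) (neg_nonneg.2 hc0)) hh])
    have hLnn := lap_nonneg hKnn z₁
    have h2 := mul_le_mul_of_nonneg_right (mul_le_mul_of_nonneg_left hexp hp0.le) hLnn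
    unfold psi
    nlinarith [h2]
  -- disjointness
  have hdisj : ∀ c : ℝ, c ∈ SetA p q h K a b → c ∈ SetB p q h K a b → False := by
    intro c hA hB
    obtain ⟨z2, hz2d, hz2pos, hz2le⟩ := hA
    obtain ⟨z1', hz1d, hz1neg, hz1le⟩ := hB
    have h0 := between_nonpos (psi_convexOn hp0 hKnn hdomI c) hz1d hz2d hz1neg hz2pos hz1le hz2le
    rw [psi_zero hKnorm] at h0
    linarith
  obtain ⟨cB0, hcB0⟩ := hBne
  obtain ⟨cA0, hcA0⟩ := hAne
  have hAbdd : BddBelow (SetA p q h K a b) := by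
    refine ⟨cB0, fun x hx => ?_⟩
    by_contra hlt
    push_neg at hlt
    exact hdisj cB0 (setA_up hp0 hh hKnn hx hlt.le) hcB0
  have hBbdd : BddAbove (SetB p q h K a b) := by
    refine ⟨cA0, fun x hx => ?_⟩
    by_contra hlt
    push_neg at hlt
    exact hdisj cA0 hcA0 (setB_down hp0 hh hKnn hx hlt.le)
  have hcpA : sInf (SetA p q h K a b) ∈ SetA p q h K a b :=
    sInf_SetA_mem hq hpq hh hKm hKnn hKnorm hdomI ⟨cA0, hcA0⟩
  have hcmB : sSup (SetB p q h K a b) ∈ SetB p q h K a b :=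
    sSup_SetB_mem hq hpq hh hKm hKnn hKnorm hdomI ⟨cB0, hcB0⟩
  set cp := sInf (SetA p q h K a b) with hcpdef
  set cm := sSup (SetB p q h K a b) with hcmdef
  -- roots via IVT
  have hrootA : ∀ c : ℝ, c ∈ SetA p q h K a b →
      ∃ z, z ∈ Stmt17.dom a b ∧ 0 < z ∧ psi p q h K z c = 0 := by
    intro c hc
    obtain ⟨z2, hz2d, hz2pos, hz2le⟩ := hc
    have hsub : Icc (0:ℝ) z2 ⊆ Stmt17.dom a b := dom_ordConn.out h0mem hz2d
    have hcont : ContinuousOn (fun z => psi p q h K z c) (Icc 0 z2) := fun w hw =>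
      (psi_contAt1 hKm hKnn hdomI (hsub hw) c).continuousWithinAt
    have h0m : (0:ℝ) ∈ Icc (psi p q h K z2 c) (psi p q h K 0 c) :=
      ⟨hz2le, by rw [psi_zero hKnorm]; linarith⟩
    obtain ⟨zr, hzrI, hzr⟩ := intermediate_value_Icc' hz2pos.le hcont h0m
    have hzr' : psi p q h K zr c = 0 := hzr
    refine ⟨zr, hsub hzrI, ?_, hzr'⟩
    rcases eq_or_lt_of_le hzrI.1 with heq | hlt
    · exfalso
      rw [← heq, psi_zero hKnorm] at hzr'
      linarith
    · exact hlt
  have hrootB : ∀ c : ℝ, c ∈ SetB p q h K a b →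
      ∃ z, z ∈ Stmt17.dom a b ∧ z < 0 ∧ psi p q h K z c = 0 := by
    intro c hc
    obtain ⟨z2, hz2d, hz2neg, hz2le⟩ := hc
    have hsub : Icc z2 (0:ℝ) ⊆ Stmt17.dom a b := dom_ordConn.out hz2d h0mem
    have hcont : ContinuousOn (fun z => psi p q h K z c) (Icc z2 0) := fun w hw =>
      (psi_contAt1 hKm hKnn hdomI (hsub hw) c).continuousWithinAt
    have h0m : (0:ℝ) ∈ Icc (psi p q h K z2 c) (psi p q h K 0 c) :=
      ⟨hz2le, by rw [psi_zero hKnorm]; linarith⟩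
    obtain ⟨zr, hzrI, hzr⟩ := intermediate_value_Icc hz2neg.le hcont h0m
    have hzr' : psi p q h K zr c = 0 := hzr
    refine ⟨zr, hsub hzrI, ?_, hzr'⟩
    rcases eq_or_lt_of_le hzrI.2 with heq | hlt
    · exfalso
      rw [heq, psi_zero hKnorm] at hzr'
      linarith
    · exact hlt
  -- at most two roots
  have htwo : ∀ c : ℝ, ∃ z₁ z₂ : ℝ, ∀ z : ℝ, z ∈ Stmt17.dom a b →
      psi p q h K z c = 0 → z = z₁ ∨ z = z₂ := by
    intro c
    by_cases h1 : ∃ z, z ∈ Stmt17.dom a b ∧ psi p q h K z c = 0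
    · obtain ⟨w1, hw1d, hw1⟩ := h1
      by_cases h2 : ∃ z, (z ∈ Stmt17.dom a b ∧ psi p q h K z c = 0) ∧ z ≠ w1
      · obtain ⟨w2, ⟨hw2d, hw2⟩, hne⟩ := h2
        refine ⟨w1, w2, fun z hzd hz => ?_⟩
        by_contra hcon
        push_neg at hcon
        obtain ⟨hne1, hne2⟩ := hcon
        have hsc := psi_strictConvexOn (p := p) (q := q) (h := h) hp0 hKnn hdomI c
        rcases lt_trichotomy z w1 with h01 | h01 | h01
        · rcases lt_trichotomy w1 w2 with h12 | h12 | h12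
          · exact no_three_roots hsc hzd hw2d h01 h12 hz hw1 hw2
          · exact hne h12.symm
          · rcases lt_trichotomy z w2 with h02 | h02 | h02
            · exact no_three_roots hsc hzd hw1d h02 h12 hz hw2 hw1
            · exact hne2 h02
            · exact no_three_roots hsc hw2d hw1d h02 h01 hw2 hz hw1
        · exact hne1 h01
        · rcases lt_trichotomy w1 w2 with h12 | h12 | h12
          · rcases lt_trichotomy z w2 with h02 | h02 | h02
            · exact no_three_roots hsc hw1d hw2d h01 h02 hw1 hz hw2
            · exact hne2 h02
            · exact no_three_roots hsc hw1d hzd h12 h02 hw1 hw2 hz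
          · exact hne h12.symm
          · exact no_three_roots hsc hw2d hzd h12 h01 hw2 hw1 hz
      · push_neg at h2
        exact ⟨w1, w1, fun z hzd hz => Or.inl (h2 z ⟨hzd, hz⟩)⟩
    · push_neg at h1
      exact ⟨0, 0, fun z hzd hz => absurd hz (h1 z hzd)⟩
  refine ⟨cm, cp, ?_, ?_, ?_⟩
  · -- cm < cp
    by_contra hle
    push_neg at hle
    exact hdisj cm (setA_up hp0 hh hKnn hcpA hle) hcmB
  · intro c hc
    refine ⟨?_, ?_, ?_⟩
    · -- existence of a root
      rcases hc with hcm | hcp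
      · obtain ⟨z, hzd, _, hzeq⟩ := hrootB c (setB_down hp0 hh hKnn hcmB hcm)
        exact ⟨z, (hdomI z).2 hzd, hzeq⟩
      · obtain ⟨z, hzd, _, hzeq⟩ := hrootA c (setA_up hp0 hh hKnn hcpA hcp)
        exact ⟨z, (hdomI z).2 hzd, hzeq⟩
    · -- at most two roots
      obtain ⟨w1, w2, hw⟩ := htwo c
      exact ⟨w1, w2, fun z hzint hzeq => hw z ((hdomI z).1 hzint) hzeq⟩
    · -- signs
      intro z hzint hzeq
      replace hzeq : psi p q h K z c = 0 := hzeq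
      have hzd := (hdomI z).1 hzint
      constructor
      · intro hcpc
        obtain ⟨z2, hz2d, hz2pos, hz2le⟩ := setA_up hp0 hh hKnn hcpA hcpc
        by_contra hzle
        push_neg at hzle
        have hz0 : z ≠ 0 := by
          intro hz0
          rw [hz0, psi_zero hKnorm] at hzeq
          linarith
        have hzneg : z < 0 := lt_of_le_of_ne hzle hz0
        have h0 := between_nonpos (psi_convexOn hp0 hKnn hdomI c) hzd hz2d hzneg hz2pos
          (le_of_eq hzeq) hz2le
        rw [psi_zero hKnorm] at h0
        linarith
      · intro hcmc
        obtain ⟨z2, hz2d, hz2neg, hz2le⟩ := setB_down hp0 hh hKnn hcmB hcmc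
        by_contra hzle
        push_neg at hzle
        have hz0 : z ≠ 0 := by
          intro hz0
          rw [hz0, psi_zero hKnorm] at hzeq
          linarith
        have hzpos : 0 < z := lt_of_le_of_ne hzle (Ne.symm hz0)
        have h0 := between_nonpos (psi_convexOn hp0 hKnn hdomI c) hz2d hzd hz2neg hzpos
          hz2le (le_of_eq hzeq)
        rw [psi_zero hKnorm] at h0
        linarith
  · -- gap positivity
    intro c hcm hcp z hzint
    have hzd := (hdomI z).1 hzint
    show 0 < psi p q h K z c
    by_contra hle
    push_neg at hle
    rcases lt_trichotomy z 0 with hz | hz | hz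
    · exact absurd (le_csSup hBbdd ⟨z, hzd, hz, hle⟩) (not_le.2 hcm)
    · rw [hz, psi_zero hKnorm] at hle
      linarith
    · exact absurd (csInf_le hAbdd ⟨z, hzd, hz, hle⟩) (not_le.2 hcp)
end
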